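/- arXiv:1601.04604 — 4 statements merged into one kernel-verified Lean document; each statement's English description precedes it below -/
import Mathlib

section
/- Let P be a polynomial in d real variables such that the gradient ∇P does not vanish on the zero set Z = {ξ ∈ ℝ^d : P(ξ) = 0}. If φ ∈ C_0^∞(ℝ^d) vanishes on Z, then the quotient φ/P extends to a function in C_0^∞(ℝ^d). -/
open Filter Metric MeasureTheory intervalIntegral Set
open scoped Topology ContDiff Manifold
set_option maxHeartbeats 1000000
set_option synthInstance.maxHeartbeats 200000

lemma contDiff_mvpoly {d : ℕ} {n : WithTop ℕ∞} (P : MvPolynomial (Fin d) ℝ) :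
    ContDiff ℝ n (fun x : Fin d → ℝ => MvPolynomial.eval x P) := by
  induction P using MvPolynomial.induction_on with
  | C a => simpa using contDiff_const
  | add p q hp hq => simpa using hp.add hq
  | mul_X p i hp =>
      simpa [MvPolynomial.eval_mul] using hp.mul ((ContinuousLinearMap.proj i
        (R := ℝ) (φ := fun _ : Fin d => ℝ)).contDiff)

section pint
variable {H : Type} [NormedAddCommGroup H] [NormedSpace ℝ H] [FiniteDimensional ℝ H]
  {F : Type} [NormedAddCommGroup F] [NormedSpace ℝ F]

lemma pint_hasFDerivAt (f : H × ℝ → F) (hf : ContDiff ℝ (⊤ : ℕ∞) f) (y₀ : H) :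
    HasFDerivAt (fun y => ∫ s in (0:ℝ)..1, f (y, s))
      (∫ s in (0:ℝ)..1, ((fderiv ℝ f (y₀, s)).comp (ContinuousLinearMap.inl ℝ H ℝ))) y₀ := by
  set g : H × ℝ → (H →L[ℝ] F) := fun z => (fderiv ℝ f z).comp (ContinuousLinearMap.inl ℝ H ℝ)
    with hgdef
  have hfc : Continuous f := hf.continuous
  have hgc : Continuous g := by
    have h1 : Continuous (fderiv ℝ f) := hf.continuous_fderiv (by simp)
    fun_prop
  obtain ⟨M, hM⟩ : ∃ M, ∀ z ∈ (closedBall y₀ 1 ×ˢ Icc (0:ℝ) 1), ‖g z‖ ≤ M :=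
    ((isCompact_closedBall y₀ 1).prod isCompact_Icc).exists_bound_of_continuousOn
      hgc.continuousOn
  have hdiff : ∀ (x : H) (t : ℝ), HasFDerivAt (fun x => f (x, t)) (g (x, t)) x := by
    intro x t
    have h1 : HasFDerivAt f (fderiv ℝ f (x, t)) (x, t) :=
      (hf.differentiable (by simp) (x, t)).hasFDerivAt
    have h2 : HasFDerivAt (fun x : H => (x, t))
        ((ContinuousLinearMap.id ℝ H).prod 0) x :=
      HasFDerivAt.prodMk (hasFDerivAt_id x) (hasFDerivAt_const t x)
    have h3 := h1.comp x h2
    have he : (fderiv ℝ f (x, t)).comp ((ContinuousLinearMap.id ℝ H).prod 0) = g (x, t) := by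
      ext v; simp [hgdef]
    rwa [he] at h3
  have key := intervalIntegral.hasFDerivAt_integral_of_dominated_of_fderiv_le
    (𝕜 := ℝ) (μ := volume) (F := fun x t => f (x, t)) (F' := fun x t => g (x, t))
    (x₀ := y₀) (a := 0) (b := 1) (bound := fun _ => M) (ball_mem_nhds y₀ one_pos)
    (Eventually.of_forall fun x =>
      (hfc.comp (Continuous.prodMk_right x)).aestronglyMeasurable)
    ((hfc.comp (Continuous.prodMk_right y₀)).intervalIntegrable 0 1)
    ((hgc.comp (Continuous.prodMk_right y₀)).aestronglyMeasurable)
    (Eventually.of_forall fun t ht x hx => hM (x, t)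
      ⟨ball_subset_closedBall hx, Ioc_subset_Icc_self (by simpa using ht)⟩)
    (intervalIntegrable_const)
    (Eventually.of_forall fun t ht x hx => hdiff x t)
  exact key


lemma pint_contDiff_nat (n : ℕ) :
    ∀ {F : Type} [NormedAddCommGroup F] [NormedSpace ℝ F] (f : H × ℝ → F),
      ContDiff ℝ (⊤ : ℕ∞) f → ContDiff ℝ (n : WithTop ℕ∞) (fun y => ∫ s in (0:ℝ)..1, f (y, s)) := by
  induction n with
  | zero =>
      intro F _ _ f hf
      have hd : Differentiable ℝ (fun y => ∫ s in (0:ℝ)..1, f (y, s)) :=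
        fun y => (pint_hasFDerivAt f hf y).differentiableAt
      exact contDiff_zero.2 hd.continuous
  | succ n ih =>
      intro F _ _ f hf
      have hcast : ((n + 1 : ℕ) : WithTop ℕ∞) = (n : WithTop ℕ∞) + 1 := by push_cast; rfl
      rw [hcast, contDiff_succ_iff_fderiv]
      refine ⟨fun y => (pint_hasFDerivAt f hf y).differentiableAt, by simp, ?_⟩
      have hfe : (fderiv ℝ fun y => ∫ s in (0:ℝ)..1, f (y, s)) =
          fun y => ∫ s in (0:ℝ)..1,
            ((fderiv ℝ f (y, s)).comp (ContinuousLinearMap.inl ℝ H ℝ)) := by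
        funext y; exact (pint_hasFDerivAt f hf y).fderiv
      rw [hfe]
      have h1 : ContDiff ℝ (⊤ : ℕ∞) (fderiv ℝ f) := hf.fderiv_right (by exact_mod_cast le_top)
      have hg : ContDiff ℝ (⊤ : ℕ∞) (fun z : H × ℝ =>
          ((fderiv ℝ f z).comp (ContinuousLinearMap.inl ℝ H ℝ))) :=
        (((ContinuousLinearMap.compL ℝ H (H × ℝ) F).flip
          (ContinuousLinearMap.inl ℝ H ℝ)).contDiff).comp h1
      exact ih (F := H →L[ℝ] F) _ hg

lemma pint_contDiff {F : Type} [NormedAddCommGroup F] [NormedSpace ℝ F] (f : H × ℝ → F)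
    (hf : ContDiff ℝ (⊤ : ℕ∞) f) :
    ContDiff ℝ (⊤ : ℕ∞) (fun y => ∫ s in (0:ℝ)..1, f (y, s)) := by
  have : ((⊤ : ℕ∞) : WithTop ℕ∞) = ∞ := rfl
  rw [this, contDiff_infty]
  exact fun n => pint_contDiff_nat n f hf

end pint

section localdiv
variable {E : Type} [NormedAddCommGroup E] [NormedSpace ℝ E] [FiniteDimensional ℝ E]

lemma local_div (p : E → ℝ) (hp : ContDiff ℝ (⊤ : ℕ∞) p)
    (φ : E → ℂ) (hφ : ContDiff ℝ (⊤ : ℕ∞) φ)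
    (hvanish : ∀ x, p x = 0 → φ x = 0)
    (ξ0 : E) (h0 : p ξ0 = 0) (hL0 : fderiv ℝ p ξ0 ≠ 0) :
    ∃ U ∈ 𝓝 ξ0, ∃ h : E → ℂ, ContDiff ℝ (⊤ : ℕ∞) h ∧
      ∀ x ∈ U, p x ≠ 0 → h x = φ x / (p x : ℂ) := by
  set L := fderiv ℝ p ξ0 with hLdef
  obtain ⟨w, hw⟩ : ∃ w, L w ≠ 0 := by
    by_contra hcon
    push_neg at hcon
    exact hL0 (ContinuousLinearMap.ext fun v => by simp [hcon])
  set u := (L w)⁻¹ • w with hudef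
  have hu : L u = 1 := by
    simp only [hudef, L.map_smul, smul_eq_mul]
    field_simp
  set G : E → E := fun x => x + (p x - L (x - ξ0)) • u with hGdef
  have hpdiff : Differentiable ℝ p := hp.differentiable (by simp)
  have hG : ContDiff ℝ (⊤ : ℕ∞) G := by
    exact contDiff_id.add
      ((hp.sub (L.contDiff.comp (contDiff_id.sub contDiff_const))).smul contDiff_const)
  have hGξ : G ξ0 = ξ0 := by simp [hGdef, h0]
  have hpG : ∀ x, L (G x - ξ0) = p x := by
    intro x
    have hx : G x - ξ0 = (x - ξ0) + (p x - L (x - ξ0)) • u := by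
      simp only [hGdef]; abel
    rw [hx, map_add, L.map_smul, hu, smul_eq_mul, mul_one]
    ring
  have hDG : HasFDerivAt G ((ContinuousLinearEquiv.refl ℝ E : E ≃L[ℝ] E) : E →L[ℝ] E) ξ0 := by
    have ha : HasFDerivAt p L ξ0 := (hpdiff ξ0).hasFDerivAt
    have hb : HasFDerivAt (fun x => L (x - ξ0)) L ξ0 := by
      have h1 : HasFDerivAt (fun x : E => x - ξ0) (ContinuousLinearMap.id ℝ E) ξ0 :=
        (hasFDerivAt_id ξ0).sub_const ξ0
      have hb' := L.hasFDerivAt.comp ξ0 h1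
      simpa only [Function.comp_def, ContinuousLinearMap.comp_id] using hb'
    have h1 : HasFDerivAt (fun x => p x - L (x - ξ0)) (L - L) ξ0 := ha.sub hb
    have h2 : HasFDerivAt (fun x => (p x - L (x - ξ0)) • u) ((L - L).smulRight u) ξ0 :=
      h1.smul_const u
    have h3 := (hasFDerivAt_id ξ0).add h2
    have he : (ContinuousLinearMap.id ℝ E) + (L - L).smulRight u
        = ((ContinuousLinearEquiv.refl ℝ E : E ≃L[ℝ] E) : E →L[ℝ] E) := by
      ext v; simp
    rwa [he] at h3
  have hstrict : HasStrictFDerivAt G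
      ((ContinuousLinearEquiv.refl ℝ E : E ≃L[ℝ] E) : E →L[ℝ] E) ξ0 :=
    hG.contDiffAt.hasStrictFDerivAt' hDG (by simp)
  set PH := HasStrictFDerivAt.toOpenPartialHomeomorph G hstrict with hPHdef
  set N : E → E := (PH.symm : E → E) with hNdef
  have hPHcoe : (PH : E → E) = G := rfl
  have hopenV : IsOpen {x : E | IsUnit (fderiv ℝ G x)} :=
    Units.isOpen.preimage (hG.continuous_fderiv (by simp))
  have hfidG : fderiv ℝ G ξ0 = ContinuousLinearMap.id ℝ E := by
    simpa using hDG.fderiv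
  have hξunit : IsUnit (fderiv ℝ G ξ0) := by
    rw [hfidG]
    exact ⟨1, rfl⟩
  set U₁ : Set E := PH.target ∩ PH.symm ⁻¹' ({x | IsUnit (fderiv ℝ G x)} ∩ PH.source)
    with hU₁def
  have hU₁open : IsOpen U₁ :=
    PH.isOpen_inter_preimage_symm (hopenV.inter PH.open_source)
  have hξ0source : ξ0 ∈ PH.source := HasStrictFDerivAt.mem_toOpenPartialHomeomorph_source hstrict
  have hξ0T : ξ0 ∈ PH.target := by
    have := HasStrictFDerivAt.image_mem_toOpenPartialHomeomorph_target hstrict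
    rwa [hGξ] at this
  have hNξ0 : N ξ0 = ξ0 := by
    have := PH.left_inv hξ0source
    rw [hPHcoe, hGξ] at this
    exact this
  have hξ0U₁ : ξ0 ∈ U₁ := ⟨hξ0T, by rw [mem_preimage]; exact ⟨by rw [← hNdef, hNξ0]; exact hξunit,
    by rw [← hNdef, hNξ0]; exact hξ0source⟩⟩
  have hGN : ∀ y ∈ PH.target, G (N y) = y := fun y hy => by
    have := PH.right_inv hy
    rwa [hPHcoe] at this
  have hNsmooth : ContDiffOn ℝ (⊤ : ℕ∞) N U₁ := by
    intro y hy
    have hyT : y ∈ PH.target := hy.1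
    have hunit : IsUnit (fderiv ℝ G (N y)) := hy.2.1
    have e := ContinuousLinearEquiv.unitsEquiv ℝ E hunit.unit
    have hfd : HasFDerivAt G ((ContinuousLinearEquiv.unitsEquiv ℝ E hunit.unit : E ≃L[ℝ] E) :
        E →L[ℝ] E) (N y) := by
      have hh : ((ContinuousLinearEquiv.unitsEquiv ℝ E hunit.unit : E ≃L[ℝ] E) : E →L[ℝ] E)
          = fderiv ℝ G (N y) := by
        ext v
        simp [ContinuousLinearEquiv.unitsEquiv_apply]
      rw [hh]
      exact (hG.differentiable (by simp) (N y)).hasFDerivAt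
    exact (PH.contDiffAt_symm hyT hfd hG.contDiffAt).contDiffWithinAt
  obtain ⟨ε, hε, hball⟩ : ∃ ε > 0, ball ξ0 ε ⊆ U₁ :=
    Metric.isOpen_iff.1 hU₁open ξ0 hξ0U₁
  set θ : ContDiffBump ξ0 := ⟨ε/2, 3*ε/4, by linarith, by linarith⟩ with hθdef
  have htsupp : tsupport θ ⊆ ball ξ0 ε := by
    rw [θ.tsupport_eq]
    exact closedBall_subset_ball (by simp [hθdef]; linarith)
  set F : E → ℂ := fun y => θ y • φ (N y) with hFdef
  have hFsmooth : ContDiff ℝ (⊤ : ℕ∞) F := by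
    rw [contDiff_iff_contDiffAt]
    intro x
    by_cases hx : x ∈ tsupport θ
    · have hxU : x ∈ U₁ := hball (htsupp hx)
      exact (θ.contDiff.contDiffAt).smul
        ((hφ.contDiffAt).comp x (hNsmooth.contDiffAt (hU₁open.mem_nhds hxU)))
    · have hev : F =ᶠ[𝓝 x] (fun _ => (0 : ℂ)) := by
        filter_upwards [(isClosed_tsupport θ).isOpen_compl.mem_nhds hx] with y hy
        simp [hFdef, image_eq_zero_of_notMem_tsupport hy]
      exact contDiffAt_const.congr_of_eventuallyEq hev
  set f2 : E × ℝ → ℂ := fun z => (fderiv ℝ F (z.1 + ((z.2 - 1) * L (z.1 - ξ0)) • u)) u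
    with hf2def
  have hf2 : ContDiff ℝ (⊤ : ℕ∞) f2 := by
    have hinner : ContDiff ℝ (⊤ : ℕ∞)
        (fun z : E × ℝ => z.1 + ((z.2 - 1) * L (z.1 - ξ0)) • u) :=
      contDiff_fst.add (((contDiff_snd.sub contDiff_const).mul
        (L.contDiff.comp (contDiff_fst.sub contDiff_const))).smul contDiff_const)
    have hdF : ContDiff ℝ (⊤ : ℕ∞) (fderiv ℝ F) :=
      hFsmooth.fderiv_right (by exact_mod_cast le_top)
    exact ((ContinuousLinearMap.apply ℝ ℂ u).contDiff).comp (hdF.comp hinner)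
  set g : E → ℂ := fun y => ∫ s in (0:ℝ)..1, f2 (y, s) with hgdef
  have hgsmooth : ContDiff ℝ (⊤ : ℕ∞) g := pint_contDiff f2 hf2
  have hkey : ∀ y : E, (y - (L (y - ξ0)) • u) ∈ U₁ → F y = (L (y - ξ0) : ℂ) * g y := by
    intro y hyU
    set c := L (y - ξ0) with hcdef
    have hFd : Differentiable ℝ F := hFsmooth.differentiable (by simp)
    have hderiv : ∀ s : ℝ, HasDerivAt (fun s => F (y + ((s - 1) * c) • u)) (c • f2 (y, s)) s := by
      intro s
      have h1 : HasDerivAt (fun s : ℝ => (s - 1) * c) c s := by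
        simpa using ((hasDerivAt_id s).sub_const 1).mul_const c
      have h1' : HasDerivAt (fun s : ℝ => y + ((s - 1) * c) • u) (c • u) s :=
        (h1.smul_const u).const_add y
      have h2 : HasFDerivAt F (fderiv ℝ F (y + ((s - 1) * c) • u)) (y + ((s - 1) * c) • u) :=
        (hFd _).hasFDerivAt
      have he : c • f2 (y, s) = (fderiv ℝ F (y + ((s - 1) * c) • u)) (c • u) := by
        simp only [hf2def]
        rw [← hcdef]
        exact (_root_.map_smul _ c u).symm
      rw [he]
      exact h2.comp_hasDerivAt s h1'
    have hcont : Continuous (fun s : ℝ => c • f2 (y, s)) :=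
      (hf2.continuous.comp (Continuous.prodMk_right y)).const_smul c
    have hInt := intervalIntegral.integral_eq_sub_of_hasDerivAt
      (fun s _ => hderiv s) (hcont.intervalIntegrable 0 1)
    have hσ1 : y + (((1:ℝ) - 1) * c) • u = y := by simp
    have hσ0 : y + (((0:ℝ) - 1) * c) • u = y - c • u := by
      rw [show ((0:ℝ) - 1) * c = -c by ring]
      simp [neg_smul]
      abel
    rw [hσ1, hσ0] at hInt
    have hF0 : F (y - c • u) = 0 := by
      have hmemT : (y - c • u) ∈ PH.target := hyU.1
      have hGNr : G (N (y - c • u)) = y - c • u := hGN _ hmemT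
      have hpN : p (N (y - c • u)) = 0 := by
        have h5 := hpG (N (y - c • u))
        rw [hGNr] at h5
        rw [← h5, show y - c • u - ξ0 = (y - ξ0) - c • u by abel, map_sub, L.map_smul, hu]
        simp [hcdef, smul_eq_mul]
      simp [hFdef, hvanish _ hpN]
    rw [hF0, sub_zero] at hInt
    have hsm : ∫ s in (0:ℝ)..1, c • f2 (y, s) = c • g y := by
      rw [hgdef]
      exact intervalIntegral.integral_smul c (fun s => f2 (y, s))
    rw [hsm] at hInt
    rw [← hInt, Complex.real_smul]
  -- assemble
  have hWθ : G ⁻¹' (closedBall ξ0 (ε/2)) ∈ 𝓝 ξ0 := by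
    apply hG.continuous.continuousAt.preimage_mem_nhds
    rw [hGξ]
    exact closedBall_mem_nhds ξ0 (by linarith)
  have hWV : G ⁻¹' {y | y - (L (y - ξ0)) • u ∈ U₁} ∈ 𝓝 ξ0 := by
    apply hG.continuous.continuousAt.preimage_mem_nhds
    rw [hGξ]
    have hopen : IsOpen {y : E | y - (L (y - ξ0)) • u ∈ U₁} := by
      have hcont : Continuous (fun y : E => y - (L (y - ξ0)) • u) := by fun_prop
      exact hU₁open.preimage hcont
    apply hopen.mem_nhds
    simp only [mem_setOf_eq, sub_self, map_zero, zero_smul, sub_zero]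
    exact hξ0U₁
  have hWN : {x : E | N (G x) = x} ∈ 𝓝 ξ0 := HasStrictFDerivAt.eventually_left_inverse hstrict
  refine ⟨G ⁻¹' {y | y - (L (y - ξ0)) • u ∈ U₁} ∩ G ⁻¹' (closedBall ξ0 (ε/2)) ∩
      {x : E | N (G x) = x}, inter_mem (inter_mem hWV hWθ) hWN,
    fun x => g (G x), hgsmooth.comp hG, ?_⟩
  intro x hx hpx
  have h1 : F (G x) = (L (G x - ξ0) : ℂ) * g (G x) := hkey (G x) hx.1.1
  rw [hpG x] at h1
  have hθ1 : θ (G x) = 1 := θ.one_of_mem_closedBall hx.1.2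
  have h2 : F (G x) = φ x := by
    rw [hFdef]
    simp only [hθ1, one_smul]
    rw [hx.2]
  rw [h2] at h1
  rw [h1]
  have hpx' : (p x : ℂ) ≠ 0 := by exact_mod_cast hpx
  field_simp
end localdiv

/-- Division lemma: if `P` is a polynomial in `d` real variables whose gradient does not
vanish on its zero set, and `φ ∈ C_0^∞(ℝ^d)` vanishes on the zero set of `P`, then the
quotient `φ / P` extends to a smooth compactly supported function on `ℝ^d`. -/
theorem smooth_div_polynomial (d : ℕ) (P : MvPolynomial (Fin d) ℝ)
    (hgrad : ∀ ξ : Fin d → ℝ, MvPolynomial.eval ξ P = 0 →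
      fderiv ℝ (fun x : Fin d → ℝ => MvPolynomial.eval x P) ξ ≠ 0)
    (φ : (Fin d → ℝ) → ℂ) (hφ : ContDiff ℝ (⊤ : ℕ∞) φ) (hφsupp : HasCompactSupport φ)
    (hvanish : ∀ ξ : Fin d → ℝ, MvPolynomial.eval ξ P = 0 → φ ξ = 0) :
    ∃ ψ : (Fin d → ℝ) → ℂ, ContDiff ℝ (⊤ : ℕ∞) ψ ∧ HasCompactSupport ψ ∧
      ∀ ξ : Fin d → ℝ, MvPolynomial.eval ξ P ≠ 0 →
        ψ ξ = φ ξ / (MvPolynomial.eval ξ P : ℂ) := by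
  have hp : ContDiff ℝ (⊤ : ℕ∞) (fun x : Fin d → ℝ => MvPolynomial.eval x P) :=
    contDiff_mvpoly P
  set p : (Fin d → ℝ) → ℝ := fun x => MvPolynomial.eval x P with hpdef
  set t : (Fin d → ℝ) → Set ℂ := fun x => if p x = 0 then univ else {φ x / (p x : ℂ)} with htdef
  have hconv : ∀ x, Convex ℝ (t x) := by
    intro x
    by_cases h : p x = 0 <;> simp [htdef, h, convex_univ, convex_singleton]
  have Hloc : ∀ x : Fin d → ℝ, ∃ U ∈ 𝓝 x, ∃ g : (Fin d → ℝ) → ℂ,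
      ContMDiffOn 𝓘(ℝ, Fin d → ℝ) 𝓘(ℝ, ℂ) ∞ g U ∧ ∀ y ∈ U, g y ∈ t y := by
    intro x
    by_cases hx : p x = 0
    · obtain ⟨U, hU, h, hsmooth, hprop⟩ :=
        local_div p hp φ hφ (fun z hz => hvanish z hz) x hx (hgrad x hx)
      refine ⟨U, hU, h, ?_, ?_⟩
      · rw [contMDiffOn_iff_contDiffOn]
        exact hsmooth.contDiffOn
      · intro y hy
        by_cases hpy : p y = 0
        · simp [htdef, hpy]
        · simp only [htdef, hpy, if_neg hpy, mem_singleton_iff]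
          exact hprop y hy hpy
    · have hopen : IsOpen {y : Fin d → ℝ | p y ≠ 0} :=
        isOpen_compl_iff.2 (isClosed_singleton.preimage hp.continuous)
      refine ⟨{y | p y ≠ 0}, hopen.mem_nhds hx, fun y => φ y / (p y : ℂ), ?_, ?_⟩
      · rw [contMDiffOn_iff_contDiffOn]
        have h1 : ContDiffOn ℝ ((⊤ : ℕ∞) : WithTop ℕ∞) (fun y => (p y)⁻¹)
            {y : Fin d → ℝ | p y ≠ 0} :=
          hp.contDiffOn.inv (fun y hy => hy)
        have h2 : ContDiffOn ℝ ((⊤ : ℕ∞) : WithTop ℕ∞)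
            (fun y => φ y * ((((p y)⁻¹ : ℝ)) : ℂ)) {y : Fin d → ℝ | p y ≠ 0} :=
          hφ.contDiffOn.mul (Complex.ofRealCLM.contDiff.comp_contDiffOn h1)
        refine h2.congr ?_
        intro y hy
        rw [div_eq_mul_inv]
        push_cast
        rfl
      · intro y hy
        simp [htdef, hy]
  obtain ⟨ψ₀, hψ₀⟩ :=
    exists_contMDiffMap_forall_mem_convex_of_local (𝓘(ℝ, Fin d → ℝ)) hconv Hloc
  have hψ₀smooth : ContDiff ℝ (⊤ : ℕ∞) (ψ₀ : (Fin d → ℝ) → ℂ) := by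
    rw [← contMDiff_iff_contDiff]
    exact ψ₀.contMDiff
  have hψ₀eq : ∀ ξ, p ξ ≠ 0 → ψ₀ ξ = φ ξ / (p ξ : ℂ) := by
    intro ξ hξ
    have := hψ₀ ξ
    simpa [htdef, hξ] using this
  obtain ⟨R, hR0, hRs⟩ : ∃ R, 0 < R ∧ tsupport φ ⊆ closedBall 0 R :=
    hφsupp.isCompact.isBounded.subset_closedBall_lt 0 0
  set χ : ContDiffBump (0 : Fin d → ℝ) := ⟨R, 2*R, hR0, by linarith⟩ with hχdef
  refine ⟨fun x => χ x • ψ₀ x, χ.contDiff.smul hψ₀smooth, ?_, ?_⟩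
  · exact χ.hasCompactSupport.smul_right
  · intro ξ hξ
    have hp' : p ξ ≠ 0 := hξ
    by_cases hmem : ξ ∈ tsupport φ
    · have h1 : χ ξ = 1 := χ.one_of_mem_closedBall (hRs hmem)
      show χ ξ • ψ₀ ξ = _
      rw [h1, one_smul, hψ₀eq ξ hp']
    · have hφ0 : φ ξ = 0 := image_eq_zero_of_notMem_tsupport hmem
      show χ ξ • ψ₀ ξ = _
      rw [hψ₀eq ξ hp']
      simp [hφ0]
end

section
/- Let α ∈ (0,d) and let ν be a finite complex measure on ℝ^d with I(ν,α) = ∫ |𝓕^{-1}[ν](x)|² (1+|x|)^{α−d} dx < ∞. Let φ ∈ C_0^∞(ℝ^d) and φ_r(ξ) = φ(ξ/r). Then for all r ∈ (0,1] and all η ∈ ℝ^d, |∫ φ_r(ξ+η) dν(ξ)| ≤ C · I(ν,α)^{1/2} · r^{α/2}, where C depends only on φ, d, α. -/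
open MeasureTheory
open scoped RealInnerProductSpace FourierTransform SchwartzMap Real

noncomputable section

/-- The inverse Fourier transform `𝓕⁻¹[ν](x) = ∫ e^{2πi⟨x,ξ⟩} dν(ξ)` of the complex
measure `ν = f dμ` (`μ` a finite measure, `f` integrable). -/
def invFourierMeasure {d : ℕ} (μ : Measure (EuclideanSpace ℝ (Fin d)))
    (f : EuclideanSpace ℝ (Fin d) → ℂ) : EuclideanSpace ℝ (Fin d) → ℂ :=
  fun x => ∫ ξ, Complex.exp (2 * Real.pi * Complex.I * (⟪x, ξ⟫ : ℝ)) * f ξ ∂μ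

namespace FrostmanAux

lemma norm_exp_two_pi_I (a : ℝ) : ‖Complex.exp (2 * Real.pi * Complex.I * (a : ℂ))‖ = 1 := by
  have h : (2 * (Real.pi : ℂ) * Complex.I * (a : ℂ)) = ((2 * Real.pi * a : ℝ) : ℂ) * Complex.I := by
    push_cast; ring
  rw [h, Complex.norm_exp_ofReal_mul_I]

variable {D : Type*} [NormedAddCommGroup D] [NormedSpace ℝ D]

lemma exists_schwartz (g : D → ℂ) (hg : ContDiff ℝ (⊤ : ℕ∞) g)
    (hsupp : HasCompactSupport g) : ∃ s : 𝓢(D, ℂ), ⇑s = g := by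
  refine ⟨⟨g, hg, fun k n => ?_⟩, rfl⟩
  have h1 : Continuous fun x => ‖x‖ ^ k * ‖iteratedFDeriv ℝ n g x‖ :=
    (continuous_norm.pow k).mul (hg.continuous_iteratedFDeriv (mod_cast le_top)).norm
  have h2 : HasCompactSupport fun x => ‖x‖ ^ k * ‖iteratedFDeriv ℝ n g x‖ := by
    have := (hsupp.iteratedFDeriv (𝕜 := ℝ) n).norm
    exact this.mul_left
  obtain ⟨C, hC⟩ := h2.exists_bound_of_continuous h1
  refine ⟨C, fun x => ?_⟩
  have := hC x
  rwa [Real.norm_eq_abs, abs_of_nonneg (by positivity)] at this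


variable {d : ℕ}

lemma schwartz_decay_bound (s : 𝓢(EuclideanSpace ℝ (Fin d), ℂ)) (n : ℕ) :
    ∃ C : ℝ, 0 ≤ C ∧ ∀ x, (1 + ‖x‖) ^ n * ‖s x‖ ≤ C := by
  refine ⟨2 ^ n * (Finset.Iic (n, 0)).sup (fun m => SchwartzMap.seminorm ℝ m.1 m.2) s,
    by positivity, fun x => ?_⟩
  simpa [norm_iteratedFDeriv_zero] using
    SchwartzMap.one_add_le_sup_seminorm_apply (𝕜 := ℝ) (m := (n, 0)) le_rfl le_rfl s x

lemma schwartz_weighted_integrable (s : 𝓢(EuclideanSpace ℝ (Fin d), ℂ)) {β : ℝ} {n : ℕ}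
    (hβ : β ≤ n) :
    Integrable (fun x => ‖s x‖ ^ 2 * (1 + ‖x‖) ^ β)
      (volume : Measure (EuclideanSpace ℝ (Fin d))) := by
  obtain ⟨C, hC0, hC⟩ := schwartz_decay_bound s n
  have hcont : Continuous fun x : EuclideanSpace ℝ (Fin d) => ‖s x‖ ^ 2 * (1 + ‖x‖) ^ β :=
    (s.continuous.norm.pow 2).mul ((continuous_const.add continuous_norm).rpow_const
      (fun x => Or.inl (add_pos_of_pos_of_nonneg one_pos (norm_nonneg x)).ne'))
  refine (s.integrable.norm.const_mul C).mono' hcont.aestronglyMeasurable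
    (Filter.Eventually.of_forall fun x => ?_)
  have h1 : (0:ℝ) ≤ 1 + ‖x‖ := by positivity
  have h2 : (1 + ‖x‖) ^ β ≤ (1 + ‖x‖) ^ (n:ℝ) :=
    Real.rpow_le_rpow_of_exponent_le (by linarith [norm_nonneg x]) hβ
  rw [Real.norm_of_nonneg (by positivity)]
  calc ‖s x‖ ^ 2 * (1 + ‖x‖) ^ β ≤ ‖s x‖ ^ 2 * (1 + ‖x‖) ^ (n:ℝ) := by
        exact mul_le_mul_of_nonneg_left h2 (by positivity)
    _ = ((1 + ‖x‖) ^ n * ‖s x‖) * ‖s x‖ := by rw [Real.rpow_natCast]; ring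
    _ ≤ C * ‖s x‖ := mul_le_mul_of_nonneg_right (hC x) (norm_nonneg _)

lemma norm_fourier_translate_dilate (g : EuclideanSpace ℝ (Fin d) → ℂ) {r : ℝ} (hr : 0 < r)
    (η x : EuclideanSpace ℝ (Fin d)) :
    ‖𝓕 (fun ξ => g (r⁻¹ • (ξ + η))) x‖ = r ^ d * ‖𝓕 g (r • x)‖ := by
  have hr' : r ≠ 0 := hr.ne'
  rw [Real.fourier_eq']
  set G : EuclideanSpace ℝ (Fin d) → ℂ := fun ξ =>
    Complex.exp ((↑(-2 * Real.pi * ⟪ξ - η, x⟫) * Complex.I)) • g (r⁻¹ • ξ) with hG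
  have e1 : (∫ ξ, Complex.exp ((↑(-2 * Real.pi * ⟪ξ, x⟫) * Complex.I)) • g (r⁻¹ • (ξ + η)))
      = ∫ ξ, G ξ := by
    rw [← integral_add_right_eq_self G η]
    congr 1 with ξ
    simp [hG, add_sub_cancel_right]
  set W : EuclideanSpace ℝ (Fin d) → ℂ := fun z =>
    Complex.exp ((↑(-2 * Real.pi * ⟪z, r • x⟫) * Complex.I)) • g z with hW
  have e2 : ∫ ξ, G ξ = Complex.exp ((↑(2 * Real.pi * ⟪η, x⟫) * Complex.I)) *
      ∫ ξ, W (r⁻¹ • ξ) := by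
    rw [← integral_const_mul]
    congr 1 with ξ
    have h3 : ⟪r⁻¹ • ξ, r • x⟫ = ⟪ξ, x⟫ := by
      rw [real_inner_smul_left, real_inner_smul_right, ← mul_assoc, inv_mul_cancel₀ hr', one_mul]
    simp only [hG, hW, h3, smul_eq_mul, ← mul_assoc, ← Complex.exp_add]
    congr 2
    rw [inner_sub_left]
    push_cast
    ring
  have e3 : ∫ ξ, W (r⁻¹ • ξ) = (r ^ d : ℝ) • 𝓕 g (r • x) := by
    rw [MeasureTheory.Measure.integral_comp_inv_smul_of_nonneg volume W hr.le,
      finrank_euclideanSpace_fin, Real.fourier_eq']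
  rw [e1, e2, e3]
  rw [norm_mul, Complex.norm_exp_ofReal_mul_I, one_mul, norm_smul, Real.norm_of_nonneg
    (by positivity)]


lemma continuous_invFourierMeasure {d : ℕ} (μ : Measure (EuclideanSpace ℝ (Fin d)))
    [IsFiniteMeasure μ] {f : EuclideanSpace ℝ (Fin d) → ℂ} (hf : Integrable f μ) :
    Continuous (invFourierMeasure μ f) := by
  apply continuous_of_dominated (bound := fun ξ => ‖f ξ‖)
  · intro x
    refine AEStronglyMeasurable.mul ?_ hf.1
    exact (Complex.continuous_exp.comp (continuous_const.mul
      (Complex.continuous_ofReal.comp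
        (Continuous.inner continuous_const continuous_id)))).aestronglyMeasurable
  · intro x
    filter_upwards with ξ
    rw [norm_mul, norm_exp_two_pi_I, one_mul]
  · exact hf.norm
  · filter_upwards with ξ
    exact (Complex.continuous_exp.comp (continuous_const.mul
      (Complex.continuous_ofReal.comp
        (Continuous.inner continuous_id continuous_const)))).mul continuous_const


lemma key_identity {d : ℕ} (μ : Measure (EuclideanSpace ℝ (Fin d))) [IsFiniteMeasure μ]
    {f : EuclideanSpace ℝ (Fin d) → ℂ} (hf : Integrable f μ)
    (sh : 𝓢(EuclideanSpace ℝ (Fin d), ℂ)) :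
    ∫ ξ, sh ξ * f ξ ∂μ
      = ∫ x, 𝓕 (⇑sh) x * invFourierMeasure μ f x := by
  have hsF : ⇑(SchwartzMap.fourierTransformCLM ℝ sh) = 𝓕 ⇑sh :=
    by rw [SchwartzMap.fourierTransformCLM_apply, SchwartzMap.fourier_coe]
  have hFint : Integrable (𝓕 ⇑sh) (volume : Measure (EuclideanSpace ℝ (Fin d))) :=
    hsF ▸ (SchwartzMap.fourierTransformCLM ℝ sh).integrable
  have hFcont : Continuous (𝓕 ⇑sh) :=
    hsF ▸ (SchwartzMap.fourierTransformCLM ℝ sh).continuous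
  have hinv : 𝓕⁻ (𝓕 ⇑sh) = ⇑sh :=
    sh.continuous.fourierInv_fourier_eq sh.integrable hFint
  have hpt : ∀ ξ, sh ξ
      = ∫ x, Complex.exp (2 * Real.pi * Complex.I * (⟪x, ξ⟫ : ℝ)) * 𝓕 (⇑sh) x := by
    intro ξ
    conv_lhs => rw [← hinv]
    rw [Real.fourierInv_eq']
    congr 1 with x
    rw [smul_eq_mul]
    congr 2
    push_cast
    ring
  have c1 : Continuous fun p : EuclideanSpace ℝ (Fin d) × EuclideanSpace ℝ (Fin d) =>
      Complex.exp (2 * Real.pi * Complex.I * (⟪p.2, p.1⟫ : ℝ)) :=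
    Complex.continuous_exp.comp (continuous_const.mul
      (Complex.continuous_ofReal.comp (Continuous.inner continuous_snd continuous_fst)))
  have c2 : Continuous fun p : EuclideanSpace ℝ (Fin d) × EuclideanSpace ℝ (Fin d) =>
      𝓕 (⇑sh) p.2 := hFcont.comp continuous_snd
  have hmeas : AEStronglyMeasurable
      (fun p : EuclideanSpace ℝ (Fin d) × EuclideanSpace ℝ (Fin d) => f p.1)
      (μ.prod (volume : Measure (EuclideanSpace ℝ (Fin d)))) := hf.1.comp_fst
  have hP : Integrable (Function.uncurry fun ξ x : EuclideanSpace ℝ (Fin d) =>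
      Complex.exp (2 * Real.pi * Complex.I * (⟪x, ξ⟫ : ℝ)) * 𝓕 (⇑sh) x * f ξ)
      (μ.prod (volume : Measure (EuclideanSpace ℝ (Fin d)))) := by
    refine Integrable.mono' (hf.norm.mul_prod hFint.norm)
      ((c1.mul c2).aestronglyMeasurable.mul hmeas)
      (Filter.Eventually.of_forall fun p => ?_)
    simp only [Function.uncurry]
    rw [norm_mul, norm_mul, norm_exp_two_pi_I, one_mul]
    exact le_of_eq (mul_comm _ _)
  calc ∫ ξ, sh ξ * f ξ ∂μ
      = ∫ ξ, (∫ x, Complex.exp (2 * Real.pi * Complex.I * (⟪x, ξ⟫ : ℝ)) * 𝓕 (⇑sh) x)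
          * f ξ ∂μ := by
        refine integral_congr_ae (Filter.Eventually.of_forall fun ξ => ?_)
        exact congrArg (· * f ξ) (hpt ξ)
    _ = ∫ ξ, (∫ x, Complex.exp (2 * Real.pi * Complex.I * (⟪x, ξ⟫ : ℝ)) * 𝓕 (⇑sh) x
          * f ξ) ∂μ := by
        refine integral_congr_ae (Filter.Eventually.of_forall fun ξ => ?_)
        exact (integral_mul_const _ _).symm
    _ = ∫ x, ∫ ξ, Complex.exp (2 * Real.pi * Complex.I * (⟪x, ξ⟫ : ℝ)) * 𝓕 (⇑sh) x
          * f ξ ∂μ :=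
        integral_integral_swap hP
    _ = ∫ x, 𝓕 (⇑sh) x * invFourierMeasure μ f x := by
        refine integral_congr_ae (Filter.Eventually.of_forall fun x => ?_)
        have h5 : ∫ ξ, Complex.exp (2 * Real.pi * Complex.I * (⟪x, ξ⟫ : ℝ)) * 𝓕 (⇑sh) x
            * f ξ ∂μ = 𝓕 (⇑sh) x
            * ∫ ξ, Complex.exp (2 * Real.pi * Complex.I * (⟪x, ξ⟫ : ℝ)) * f ξ ∂μ := by
          rw [← integral_const_mul]
          refine integral_congr_ae (Filter.Eventually.of_forall fun ξ => ?_)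
          ring
        exact h5.trans rfl

end FrostmanAux

open FrostmanAux in
/-- Let `α ∈ (0,d)` and let `ν = f dμ` be a finite complex measure on `ℝ^d` with
`I(ν,α) = ∫ |𝓕⁻¹[ν](x)|² (1+|x|)^{α-d} dx < ∞`. Let `φ ∈ C_0^∞(ℝ^d)` and
`φ_r(ξ) = φ(ξ/r)`. Then there is a constant `C > 0` (depending only on `φ`, `d`, `α`)
such that `|∫ φ_r(ξ+η) dν(ξ)| ≤ C · I(ν,α)^{1/2} · r^{α/2}` for all `r ∈ (0,1]`, `η`. -/
theorem frostman_type_bound {d : ℕ} (α : ℝ) (hα0 : 0 < α) (hαd : α < d)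
    (μ : Measure (EuclideanSpace ℝ (Fin d))) [IsFiniteMeasure μ]
    (f : EuclideanSpace ℝ (Fin d) → ℂ) (hf : Integrable f μ)
    (hI : Integrable (fun x => ‖invFourierMeasure μ f x‖ ^ 2 * (1 + ‖x‖) ^ (α - d))
      (volume : Measure (EuclideanSpace ℝ (Fin d))))
    (φ : EuclideanSpace ℝ (Fin d) → ℝ) (hφ : ContDiff ℝ (⊤ : ℕ∞) φ)
    (hφsupp : HasCompactSupport φ) :
    ∃ C : ℝ, 0 < C ∧ ∀ r : ℝ, 0 < r → r ≤ 1 → ∀ η : EuclideanSpace ℝ (Fin d),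
      ‖∫ ξ, (φ (r⁻¹ • (ξ + η)) : ℂ) * f ξ ∂μ‖ ≤
        C * Real.sqrt (∫ x, ‖invFourierMeasure μ f x‖ ^ 2 * (1 + ‖x‖) ^ (α - d)
            ∂(volume : Measure (EuclideanSpace ℝ (Fin d)))) * r ^ (α / 2) := by
  have hgsm : ContDiff ℝ (⊤ : ℕ∞) (fun ξ : EuclideanSpace ℝ (Fin d) => (φ ξ : ℂ)) :=
    Complex.ofRealCLM.contDiff.comp hφ
  have hgsupp : HasCompactSupport (fun ξ : EuclideanSpace ℝ (Fin d) => (φ ξ : ℂ)) :=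
    hφsupp.comp_left (g := Complex.ofReal) Complex.ofReal_zero
  obtain ⟨sg, hsg⟩ := exists_schwartz _ hgsm hgsupp
  have hsG : ⇑(SchwartzMap.fourierTransformCLM ℝ sg)
      = 𝓕 (fun ξ : EuclideanSpace ℝ (Fin d) => (φ ξ : ℂ)) := by
    rw [SchwartzMap.fourierTransformCLM_apply, SchwartzMap.fourier_coe, hsg]
  have hdα : (0:ℝ) ≤ (d:ℝ) - α := by
    have : (α:ℝ) ≤ d := hαd.le
    linarith
  have hKint : Integrable (fun z => ‖𝓕 (fun ξ : EuclideanSpace ℝ (Fin d) => (φ ξ : ℂ)) z‖ ^ 2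
      * (1 + ‖z‖) ^ ((d:ℝ) - α)) (volume : Measure (EuclideanSpace ℝ (Fin d))) := by
    have := schwartz_weighted_integrable (SchwartzMap.fourierTransformCLM ℝ sg)
      (β := (d:ℝ) - α) (n := d) (by linarith)
    rwa [hsG] at this
  set K := ∫ z, ‖𝓕 (fun ξ : EuclideanSpace ℝ (Fin d) => (φ ξ : ℂ)) z‖ ^ 2
      * (1 + ‖z‖) ^ ((d:ℝ) - α) ∂(volume : Measure (EuclideanSpace ℝ (Fin d))) with hK
  have hK0 : 0 ≤ K := integral_nonneg fun z => by positivity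
  refine ⟨Real.sqrt K + 1, by positivity, fun r hr hr1 η => ?_⟩
  have hrinv : (1:ℝ) ≤ r⁻¹ := by
    nlinarith [inv_pos.2 hr, mul_inv_cancel₀ hr.ne']
  -- the translated/dilated bump as a Schwartz function
  have hhsm : ContDiff ℝ (⊤ : ℕ∞)
      (fun ξ : EuclideanSpace ℝ (Fin d) => (φ (r⁻¹ • (ξ + η)) : ℂ)) :=
    hgsm.comp ((contDiff_id.add contDiff_const).const_smul r⁻¹)
  have hhsupp : HasCompactSupport
      (fun ξ : EuclideanSpace ℝ (Fin d) => (φ (r⁻¹ • (ξ + η)) : ℂ)) := by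
    let e : EuclideanSpace ℝ (Fin d) ≃ₜ EuclideanSpace ℝ (Fin d) :=
      (Homeomorph.addRight η).trans (Homeomorph.smul (Units.mk0 r⁻¹ (inv_ne_zero hr.ne')))
    have he : (fun ξ : EuclideanSpace ℝ (Fin d) => (φ (r⁻¹ • (ξ + η)) : ℂ))
        = (fun ξ : EuclideanSpace ℝ (Fin d) => (φ ξ : ℂ)) ∘ e := by
      funext ξ
      simp [e, Units.smul_def]
    rw [he]
    exact hgsupp.comp_homeomorph e
  obtain ⟨sh, hsh⟩ := exists_schwartz _ hhsm hhsupp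
  -- rewrite the integral using the key identity
  have hL : ∫ ξ, (φ (r⁻¹ • (ξ + η)) : ℂ) * f ξ ∂μ
      = ∫ x, 𝓕 (⇑sh) x * invFourierMeasure μ f x := by
    rw [← key_identity μ hf sh]
    exact integral_congr_ae (Filter.Eventually.of_forall fun ξ => by rw [hsh])
  rw [hL]
  -- continuity facts
  have hFhcont : Continuous (𝓕 (⇑sh)) := by
    rw [← SchwartzMap.fourier_coe, ← SchwartzMap.fourierTransformCLM_apply (𝕜 := ℝ)]
    exact (SchwartzMap.fourierTransformCLM ℝ sh).continuous
  have hFcont : Continuous (invFourierMeasure μ f) := continuous_invFourierMeasure μ hf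
  have hbase : ∀ x : EuclideanSpace ℝ (Fin d), (0:ℝ) < 1 + ‖x‖ := fun x => by positivity
  -- weights
  have hw1cont : Continuous fun x : EuclideanSpace ℝ (Fin d) =>
      (1 + ‖x‖) ^ (((d:ℝ) - α)/2) :=
    (continuous_const.add continuous_norm).rpow_const fun x => Or.inl (hbase x).ne'
  have hw2cont : Continuous fun x : EuclideanSpace ℝ (Fin d) =>
      (1 + ‖x‖) ^ ((α - (d:ℝ))/2) :=
    (continuous_const.add continuous_norm).rpow_const fun x => Or.inl (hbase x).ne'
  have hrpow2 : ∀ (x : EuclideanSpace ℝ (Fin d)) (c : ℝ), ((1 + ‖x‖) ^ (c/2)) ^ 2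
      = (1 + ‖x‖) ^ c := by
    intro x c
    rw [← Real.rpow_natCast ((1 + ‖x‖) ^ (c/2)) 2, ← Real.rpow_mul (hbase x).le]
    norm_num
  -- the two L² functions
  set u : EuclideanSpace ℝ (Fin d) → ℝ :=
    fun x => ‖𝓕 (⇑sh) x‖ * (1 + ‖x‖) ^ (((d:ℝ) - α)/2) with hu
  set v : EuclideanSpace ℝ (Fin d) → ℝ :=
    fun x => ‖invFourierMeasure μ f x‖ * (1 + ‖x‖) ^ ((α - (d:ℝ))/2) with hv
  have husq : ∀ x, u x ^ 2 = ‖𝓕 (⇑sh) x‖ ^ 2 * (1 + ‖x‖) ^ ((d:ℝ) - α) := by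
    intro x
    rw [hu, mul_pow, hrpow2 x ((d:ℝ) - α)]
  have hvsq : ∀ x, v x ^ 2 = ‖invFourierMeasure μ f x‖ ^ 2 * (1 + ‖x‖) ^ (α - (d:ℝ)) := by
    intro x
    rw [hv, mul_pow, hrpow2 x (α - (d:ℝ))]
  -- integrability of u²
  have hFh_int : Integrable (fun x => ‖𝓕 (⇑sh) x‖ ^ 2 * (1 + ‖x‖) ^ ((d:ℝ) - α))
      (volume : Measure (EuclideanSpace ℝ (Fin d))) := by
    have := schwartz_weighted_integrable (SchwartzMap.fourierTransformCLM ℝ sh)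
      (β := (d:ℝ) - α) (n := d) (by linarith)
    rwa [SchwartzMap.fourierTransformCLM_apply, SchwartzMap.fourier_coe] at this
  have husq_int : Integrable (fun x => u x ^ 2)
      (volume : Measure (EuclideanSpace ℝ (Fin d))) := by
    refine hFh_int.congr ?_
    exact Filter.Eventually.of_forall fun x => (husq x).symm
  have hvsq_int : Integrable (fun x => v x ^ 2)
      (volume : Measure (EuclideanSpace ℝ (Fin d))) := by
    refine hI.congr ?_
    exact Filter.Eventually.of_forall fun x => (hvsq x).symm
  have hu_meas : AEStronglyMeasurable u (volume : Measure (EuclideanSpace ℝ (Fin d))) :=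
    (hFhcont.norm.mul hw1cont).aestronglyMeasurable
  have hv_meas : AEStronglyMeasurable v (volume : Measure (EuclideanSpace ℝ (Fin d))) :=
    (hFcont.norm.mul hw2cont).aestronglyMeasurable
  have h2 : ENNReal.ofReal (2:ℝ) = 2 := by
    rw [ENNReal.ofReal_ofNat]
  have hu_mem : MemLp u (ENNReal.ofReal (2:ℝ))
      (volume : Measure (EuclideanSpace ℝ (Fin d))) := by
    rw [h2]
    exact (memLp_two_iff_integrable_sq hu_meas).2 husq_int
  have hv_mem : MemLp v (ENNReal.ofReal (2:ℝ))
      (volume : Measure (EuclideanSpace ℝ (Fin d))) := by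
    rw [h2]
    exact (memLp_two_iff_integrable_sq hv_meas).2 hvsq_int
  have hpq : (2:ℝ).HolderConjugate 2 := Real.HolderConjugate.two_two
  have hCS := integral_mul_le_Lp_mul_Lq_of_nonneg hpq
    (Filter.Eventually.of_forall fun x => by positivity)
    (Filter.Eventually.of_forall fun x => by positivity) hu_mem hv_mem
  have hr2 : ∀ y : ℝ, y ^ (2:ℝ) = y ^ 2 := fun y => by
    rw [show (2:ℝ) = ((2:ℕ):ℝ) by norm_num, Real.rpow_natCast]
  -- step 1 : the norm of the integral is at most ∫ u * v
  have step1 : ‖∫ x, 𝓕 (⇑sh) x * invFourierMeasure μ f x‖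
      ≤ ∫ x, u x * v x ∂(volume : Measure (EuclideanSpace ℝ (Fin d))) := by
    refine (norm_integral_le_integral_norm _).trans (le_of_eq ?_)
    refine integral_congr_ae (Filter.Eventually.of_forall fun x => ?_)
    have hw : (1 + ‖x‖) ^ (((d:ℝ) - α)/2) * (1 + ‖x‖) ^ ((α - (d:ℝ))/2) = 1 := by
      rw [← Real.rpow_add (hbase x), show ((d:ℝ) - α)/2 + (α - (d:ℝ))/2 = 0 by ring,
        Real.rpow_zero]
    calc ‖𝓕 (⇑sh) x * invFourierMeasure μ f x‖
        = ‖𝓕 (⇑sh) x‖ * ‖invFourierMeasure μ f x‖ := norm_mul _ _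
      _ = u x * v x := by rw [hu, hv, mul_mul_mul_comm, hw, mul_one]
  -- step 2 : Cauchy–Schwarz
  have step2 : ∫ x, u x * v x ∂(volume : Measure (EuclideanSpace ℝ (Fin d)))
      ≤ (∫ x, u x ^ 2 ∂(volume : Measure (EuclideanSpace ℝ (Fin d)))) ^ ((1:ℝ)/2)
        * (∫ x, v x ^ 2 ∂(volume : Measure (EuclideanSpace ℝ (Fin d)))) ^ ((1:ℝ)/2) := by
    refine hCS.trans (le_of_eq ?_)
    congr 1
    · congr 1
      exact integral_congr_ae (Filter.Eventually.of_forall fun x => hr2 (u x))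
    · congr 1
      exact integral_congr_ae (Filter.Eventually.of_forall fun x => hr2 (v x))
  -- step 3 : the scaling bound ∫ u² ≤ r^α * K
  have hnorm : ∀ x, ‖𝓕 (⇑sh) x‖
      = r ^ d * ‖𝓕 (fun ξ : EuclideanSpace ℝ (Fin d) => (φ ξ : ℂ)) (r • x)‖ := by
    intro x
    rw [hsh]
    exact norm_fourier_translate_dilate (fun ξ => (φ ξ : ℂ)) hr η x
  have step3 : ∫ x, u x ^ 2 ∂(volume : Measure (EuclideanSpace ℝ (Fin d))) ≤ r ^ α * K := by
    have e1 : ∫ x, u x ^ 2 ∂(volume : Measure (EuclideanSpace ℝ (Fin d)))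
        = (r ^ d) ^ 2 * ∫ x, (fun z => ‖𝓕 (fun ξ : EuclideanSpace ℝ (Fin d) => (φ ξ : ℂ)) z‖ ^ 2
            * (1 + ‖r⁻¹ • z‖) ^ ((d:ℝ) - α)) (r • x)
            ∂(volume : Measure (EuclideanSpace ℝ (Fin d))) := by
      rw [← integral_const_mul]
      refine integral_congr_ae (Filter.Eventually.of_forall fun x => ?_)
      have : r⁻¹ • (r • x) = x := by
        rw [smul_smul, inv_mul_cancel₀ hr.ne', one_smul]
      simp only [this]
      rw [husq x, hnorm x, mul_pow]
      ring
    have e2 : ∫ x, (fun z => ‖𝓕 (fun ξ : EuclideanSpace ℝ (Fin d) => (φ ξ : ℂ)) z‖ ^ 2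
            * (1 + ‖r⁻¹ • z‖) ^ ((d:ℝ) - α)) (r • x)
            ∂(volume : Measure (EuclideanSpace ℝ (Fin d)))
        = (r ^ d)⁻¹ * ∫ z, ‖𝓕 (fun ξ : EuclideanSpace ℝ (Fin d) => (φ ξ : ℂ)) z‖ ^ 2
            * (1 + ‖r⁻¹ • z‖) ^ ((d:ℝ) - α)
            ∂(volume : Measure (EuclideanSpace ℝ (Fin d))) := by
      have h := MeasureTheory.Measure.integral_comp_smul
        (volume : Measure (EuclideanSpace ℝ (Fin d)))
        (fun z => ‖𝓕 (fun ξ : EuclideanSpace ℝ (Fin d) => (φ ξ : ℂ)) z‖ ^ 2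
          * (1 + ‖r⁻¹ • z‖) ^ ((d:ℝ) - α)) r
      rw [finrank_euclideanSpace_fin, abs_of_nonneg
        (by positivity : (0:ℝ) ≤ ((r:ℝ) ^ d)⁻¹), smul_eq_mul] at h
      exact h
    have e3 : ∫ z, ‖𝓕 (fun ξ : EuclideanSpace ℝ (Fin d) => (φ ξ : ℂ)) z‖ ^ 2
            * (1 + ‖r⁻¹ • z‖) ^ ((d:ℝ) - α)
            ∂(volume : Measure (EuclideanSpace ℝ (Fin d)))
        ≤ r ^ (α - (d:ℝ)) * K := by
      rw [hK, ← integral_const_mul]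
      refine integral_mono_of_nonneg (Filter.Eventually.of_forall fun z => by positivity)
        (hKint.const_mul _) (Filter.Eventually.of_forall fun z => ?_)
      have hz : ‖r⁻¹ • z‖ = r⁻¹ * ‖z‖ := by
        rw [norm_smul, Real.norm_eq_abs, abs_of_pos (inv_pos.2 hr)]
      have hle : 1 + ‖r⁻¹ • z‖ ≤ r⁻¹ * (1 + ‖z‖) := by
        rw [hz, mul_add, mul_one]
        linarith
      have h4 : (1 + ‖r⁻¹ • z‖) ^ ((d:ℝ) - α) ≤ (r⁻¹ * (1 + ‖z‖)) ^ ((d:ℝ) - α) :=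
        Real.rpow_le_rpow (by positivity) hle hdα
      have h5 : (r⁻¹ * (1 + ‖z‖)) ^ ((d:ℝ) - α)
          = r ^ (α - (d:ℝ)) * (1 + ‖z‖) ^ ((d:ℝ) - α) := by
        rw [Real.mul_rpow (by positivity) (hbase z).le, Real.inv_rpow hr.le,
          ← Real.rpow_neg hr.le, neg_sub]
      calc ‖𝓕 (fun ξ : EuclideanSpace ℝ (Fin d) => (φ ξ : ℂ)) z‖ ^ 2
            * (1 + ‖r⁻¹ • z‖) ^ ((d:ℝ) - α)
          ≤ ‖𝓕 (fun ξ : EuclideanSpace ℝ (Fin d) => (φ ξ : ℂ)) z‖ ^ 2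
            * (r ^ (α - (d:ℝ)) * (1 + ‖z‖) ^ ((d:ℝ) - α)) := by
            rw [← h5]
            exact mul_le_mul_of_nonneg_left h4 (by positivity)
        _ = r ^ (α - (d:ℝ)) * (‖𝓕 (fun ξ : EuclideanSpace ℝ (Fin d) => (φ ξ : ℂ)) z‖ ^ 2
            * (1 + ‖z‖) ^ ((d:ℝ) - α)) := by ring
    calc ∫ x, u x ^ 2 ∂(volume : Measure (EuclideanSpace ℝ (Fin d)))
        = (r ^ d) ^ 2 * ((r ^ d)⁻¹ * ∫ z,
            ‖𝓕 (fun ξ : EuclideanSpace ℝ (Fin d) => (φ ξ : ℂ)) z‖ ^ 2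
            * (1 + ‖r⁻¹ • z‖) ^ ((d:ℝ) - α)
            ∂(volume : Measure (EuclideanSpace ℝ (Fin d)))) := by rw [e1, e2]
      _ ≤ (r ^ d) ^ 2 * ((r ^ d)⁻¹ * (r ^ (α - (d:ℝ)) * K)) := by
          have h6 : (0:ℝ) < r ^ d := by positivity
          have h7 : (0:ℝ) ≤ (r ^ d) ^ 2 * (r ^ d)⁻¹ := by positivity
          calc (r ^ d) ^ 2 * ((r ^ d)⁻¹ * ∫ z,
                ‖𝓕 (fun ξ : EuclideanSpace ℝ (Fin d) => (φ ξ : ℂ)) z‖ ^ 2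
                * (1 + ‖r⁻¹ • z‖) ^ ((d:ℝ) - α)
                ∂(volume : Measure (EuclideanSpace ℝ (Fin d))))
              = (r ^ d) ^ 2 * (r ^ d)⁻¹ * ∫ z,
                ‖𝓕 (fun ξ : EuclideanSpace ℝ (Fin d) => (φ ξ : ℂ)) z‖ ^ 2
                * (1 + ‖r⁻¹ • z‖) ^ ((d:ℝ) - α)
                ∂(volume : Measure (EuclideanSpace ℝ (Fin d))) := by ring
            _ ≤ (r ^ d) ^ 2 * (r ^ d)⁻¹ * (r ^ (α - (d:ℝ)) * K) :=
                mul_le_mul_of_nonneg_left e3 h7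
            _ = (r ^ d) ^ 2 * ((r ^ d)⁻¹ * (r ^ (α - (d:ℝ)) * K)) := by ring
      _ = r ^ α * K := by
          have h8 : (r ^ d : ℝ) ^ 2 * (r ^ d)⁻¹ = r ^ d := by
            field_simp
          have h9 : (r ^ d : ℝ) * r ^ (α - (d:ℝ)) = r ^ α := by
            rw [← Real.rpow_natCast r d, ← Real.rpow_add hr]
            congr 1
            ring
          calc (r ^ d : ℝ) ^ 2 * ((r ^ d)⁻¹ * (r ^ (α - (d:ℝ)) * K))
              = ((r ^ d : ℝ) ^ 2 * (r ^ d)⁻¹) * r ^ (α - (d:ℝ)) * K := by ring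
            _ = (r ^ d : ℝ) * r ^ (α - (d:ℝ)) * K := by rw [h8]
            _ = r ^ α * K := by rw [h9]
  -- put things together
  have hIint0 : 0 ≤ ∫ x, ‖invFourierMeasure μ f x‖ ^ 2 * (1 + ‖x‖) ^ (α - (d:ℝ))
      ∂(volume : Measure (EuclideanSpace ℝ (Fin d))) := integral_nonneg fun x => by positivity
  have hv2eq : ∫ x, v x ^ 2 ∂(volume : Measure (EuclideanSpace ℝ (Fin d)))
      = ∫ x, ‖invFourierMeasure μ f x‖ ^ 2 * (1 + ‖x‖) ^ (α - (d:ℝ))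
        ∂(volume : Measure (EuclideanSpace ℝ (Fin d))) :=
    integral_congr_ae (Filter.Eventually.of_forall fun x => hvsq x)
  have hu0 : 0 ≤ ∫ x, u x ^ 2 ∂(volume : Measure (EuclideanSpace ℝ (Fin d))) :=
    integral_nonneg fun x => by positivity
  have hfinal1 : (∫ x, u x ^ 2 ∂(volume : Measure (EuclideanSpace ℝ (Fin d)))) ^ ((1:ℝ)/2)
      ≤ Real.sqrt K * r ^ (α/2) := by
    have := Real.rpow_le_rpow hu0 step3 (by norm_num : (0:ℝ) ≤ (1:ℝ)/2)
    refine this.trans (le_of_eq ?_)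
    rw [Real.mul_rpow (by positivity) hK0, ← Real.rpow_mul hr.le, Real.sqrt_eq_rpow]
    rw [mul_comm]
    congr 1
    ring
  have hfinal2 : (∫ x, v x ^ 2 ∂(volume : Measure (EuclideanSpace ℝ (Fin d)))) ^ ((1:ℝ)/2)
      = Real.sqrt (∫ x, ‖invFourierMeasure μ f x‖ ^ 2 * (1 + ‖x‖) ^ (α - (d:ℝ))
        ∂(volume : Measure (EuclideanSpace ℝ (Fin d)))) := by
    rw [hv2eq, Real.sqrt_eq_rpow]
  have hsqrtI : 0 ≤ Real.sqrt (∫ x, ‖invFourierMeasure μ f x‖ ^ 2 * (1 + ‖x‖) ^ (α - (d:ℝ))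
      ∂(volume : Measure (EuclideanSpace ℝ (Fin d)))) := Real.sqrt_nonneg _
  calc ‖∫ x, 𝓕 (⇑sh) x * invFourierMeasure μ f x‖
      ≤ ∫ x, u x * v x ∂(volume : Measure (EuclideanSpace ℝ (Fin d))) := step1
    _ ≤ (∫ x, u x ^ 2 ∂(volume : Measure (EuclideanSpace ℝ (Fin d)))) ^ ((1:ℝ)/2)
        * (∫ x, v x ^ 2 ∂(volume : Measure (EuclideanSpace ℝ (Fin d)))) ^ ((1:ℝ)/2) := step2
    _ ≤ (Real.sqrt K * r ^ (α/2)) * Real.sqrt (∫ x, ‖invFourierMeasure μ f x‖ ^ 2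
          * (1 + ‖x‖) ^ (α - (d:ℝ)) ∂(volume : Measure (EuclideanSpace ℝ (Fin d)))) := by
        rw [← hfinal2]
        refine mul_le_mul_of_nonneg_right hfinal1 ?_
        exact Real.rpow_nonneg (integral_nonneg fun x => by positivity) _
    _ ≤ (Real.sqrt K + 1) * Real.sqrt (∫ x, ‖invFourierMeasure μ f x‖ ^ 2
          * (1 + ‖x‖) ^ (α - (d:ℝ)) ∂(volume : Measure (EuclideanSpace ℝ (Fin d))))
        * r ^ (α/2) := by
        have hrα : (0:ℝ) ≤ r ^ (α/2) := Real.rpow_nonneg hr.le _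
        have : Real.sqrt K ≤ Real.sqrt K + 1 := by linarith
        calc Real.sqrt K * r ^ (α/2) * Real.sqrt (∫ x, ‖invFourierMeasure μ f x‖ ^ 2
              * (1 + ‖x‖) ^ (α - (d:ℝ)) ∂(volume : Measure (EuclideanSpace ℝ (Fin d))))
            = Real.sqrt K * Real.sqrt (∫ x, ‖invFourierMeasure μ f x‖ ^ 2
              * (1 + ‖x‖) ^ (α - (d:ℝ)) ∂(volume : Measure (EuclideanSpace ℝ (Fin d))))
              * r ^ (α/2) := by ring
          _ ≤ (Real.sqrt K + 1) * Real.sqrt (∫ x, ‖invFourierMeasure μ f x‖ ^ 2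
              * (1 + ‖x‖) ^ (α - (d:ℝ)) ∂(volume : Measure (EuclideanSpace ℝ (Fin d))))
              * r ^ (α/2) := by
              refine mul_le_mul_of_nonneg_right (mul_le_mul_of_nonneg_right this hsqrtI) hrα

end
end

section
/- Let h : (−ε,ε) → ℝ be C² with h'' > 0. For Φ continuous and compactly supported on ℝ², with Φ̃(s,t) := Φ(s+t, h(s)+h(t)), one has ∬_{(−ε,ε)²} Φ̃(s,t)|h'(s)−h'(t)| ds dt = 2 ∬_{Γ+Γ} Φ(ξ,η) dξ dη, where Γ = {(s,h(s)) : s ∈ (−ε,ε)} and Γ+Γ is the Minkowski sum. -/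
open Set MeasureTheory
open scoped Pointwise

/-- Change of variables: for `h : (-ε,ε) → ℝ` of class `C²` with `h'' > 0`, and `Φ`
continuous with compact support on `ℝ²`, with `Φ̃(s,t) = Φ(s+t, h(s)+h(t))`,
`∬ Φ̃(s,t)|h'(s)-h'(t)| ds dt = 2 ∬_{Γ+Γ} Φ(ξ,η) dξ dη` where `Γ` is the graph of `h`
and `Γ+Γ` its Minkowski sum with itself. -/
theorem integral_change_of_variables_sum_graph {ε : ℝ} (hε : 0 < ε) (h : ℝ → ℝ)
    (hC2 : ContDiffOn ℝ 2 h (Ioo (-ε) ε))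
    (hconv : ∀ x ∈ Ioo (-ε) ε, 0 < deriv (deriv h) x)
    (Φ : ℝ × ℝ → ℝ) (hΦ : Continuous Φ) (hΦsupp : HasCompactSupport Φ) :
    ∫ s in Ioo (-ε) ε, ∫ t in Ioo (-ε) ε,
        Φ (s + t, h s + h t) * |deriv h s - deriv h t| =
      2 * ∫ p in ((fun s => (s, h s)) '' Ioo (-ε) ε + (fun s => (s, h s)) '' Ioo (-ε) ε),
        Φ p := by
  have hIopen : IsOpen (Ioo (-ε) ε) := isOpen_Ioo
  set I := Ioo (-ε) ε with hIdef
  -- compact exhaustion of I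
  have hIunion : I = ⋃ n : ℕ, Icc (-ε + ε / (n + 1)) (ε - ε / (n + 1)) := by
    ext x
    simp only [mem_iUnion, mem_Icc, hIdef, mem_Ioo]
    constructor
    · rintro ⟨h1, h2⟩
      have hδ : (0:ℝ) < min (x + ε) (ε - x) / ε := by
        apply div_pos _ hε
        simp only [lt_min_iff]
        constructor <;> linarith
      obtain ⟨n, hn⟩ := exists_nat_one_div_lt hδ
      refine ⟨n, ?_, ?_⟩ <;>
      · have h1n : (0:ℝ) < (n:ℝ) + 1 := by positivity
        have h2 := mul_lt_mul_of_pos_left hn hε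
        rw [mul_one_div, ← mul_div_assoc, mul_div_cancel_left₀ _ (ne_of_gt hε)] at h2
        have hmin1 : min (x + ε) (ε - x) ≤ x + ε := min_le_left _ _
        have hmin2 : min (x + ε) (ε - x) ≤ ε - x := min_le_right _ _
        linarith
    · rintro ⟨n, h1, h2⟩
      have h1n : (0:ℝ) < ε / ((n:ℝ) + 1) := by positivity
      constructor <;> linarith
  have hIccsub : ∀ n : ℕ, Icc (-ε + ε / (n + 1)) (ε - ε / (n + 1)) ⊆ I := by
    intro n x hx
    have h1n : (0:ℝ) < ε / ((n:ℝ) + 1) := by positivity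
    exact ⟨by linarith [hx.1], by linarith [hx.2]⟩
  have himage_meas : ∀ (g : ℝ → ℝ × ℝ), ContinuousOn g I → MeasurableSet (g '' I) := by
    intro g hg
    rw [hIunion, image_iUnion]
    exact MeasurableSet.iUnion fun n =>
      ((isCompact_Icc.image_of_continuousOn (hg.mono (hIccsub n))).isClosed).measurableSet
  -- differentiability facts
  have hdiffOn : DifferentiableOn ℝ h I := hC2.differentiableOn two_ne_zero
  have hder : ∀ x ∈ I, HasDerivAt h (deriv h x) x := fun x hx =>
    ((hdiffOn x hx).differentiableAt (hIopen.mem_nhds hx)).hasDerivAt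
  have hd_cont : ContinuousOn (deriv h) I :=
    hC2.continuousOn_deriv_of_isOpen hIopen one_le_two
  have hmono : StrictMonoOn (deriv h) I :=
    strictMonoOn_of_deriv_pos (convex_Ioo _ _) hd_cont
      (by rwa [hIopen.interior_eq])
  set F : ℝ × ℝ → ℝ × ℝ := fun p => (p.1 + p.2, h p.1 + h p.2) with hFdef
  set U : Set (ℝ × ℝ) := (I ×ˢ I) ∩ {p | p.1 < p.2} with hUdef
  set V : Set (ℝ × ℝ) := (I ×ˢ I) ∩ {p | p.2 < p.1} with hVdef
  have hUopen : IsOpen U := (hIopen.prod hIopen).inter (isOpen_lt continuous_fst continuous_snd)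
  have hVopen : IsOpen V := (hIopen.prod hIopen).inter (isOpen_lt continuous_snd continuous_fst)
  have hUmeas : MeasurableSet U := hUopen.measurableSet
  have hVmeas : MeasurableSet V := hVopen.measurableSet
  -- the derivative of F
  set B : ℝ × ℝ → ℝ × ℝ →L[ℝ] ℝ × ℝ := fun p =>
    LinearMap.toContinuousLinearMap (Matrix.toLin (Module.Basis.finTwoProd ℝ) (Module.Basis.finTwoProd ℝ)
      !![1, 1; deriv h p.1, deriv h p.2]) with hBdef
  have hBderiv : ∀ p ∈ U, HasFDerivWithinAt F (B p) U p := by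
    rintro ⟨s, t⟩ hp
    have hs : s ∈ I := hp.1.1
    have ht : t ∈ I := hp.1.2
    apply HasFDerivAt.hasFDerivWithinAt
    rw [hBdef]
    simp only
    rw [Matrix.toLin_finTwoProd_toContinuousLinearMap]
    convert HasFDerivAt.prodMk (𝕜 := ℝ)
      (hasFDerivAt_fst.add hasFDerivAt_snd)
      (((hder s hs).comp_hasFDerivAt (x := ((s, t) : ℝ × ℝ)) (hasFDerivAt_fst (𝕜 := ℝ) (p := ((s, t) : ℝ × ℝ)))).add
        ((hder t ht).comp_hasFDerivAt (x := ((s, t) : ℝ × ℝ)) (hasFDerivAt_snd (𝕜 := ℝ) (p := ((s, t) : ℝ × ℝ))))) using 2 <;>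
    first | rfl | simp
  have hBdet : ∀ p : ℝ × ℝ, (B p).det = deriv h p.2 - deriv h p.1 := by
    intro p
    simp only [hBdef, LinearMap.det_toContinuousLinearMap, LinearMap.det_toLin,
      Matrix.det_fin_two_of]
    ring
  -- injectivity of F on U
  have hinj : InjOn F U := by
    have key : ∀ p ∈ U, ∀ q ∈ U, F p = F q → p.2 ≤ q.2 → p = q := by
      rintro ⟨s, t⟩ ⟨⟨hs, ht⟩, hst⟩ ⟨s', t'⟩ ⟨⟨hs', ht'⟩, hst'⟩ hFeq hle
      simp only [hFdef, Prod.mk.injEq] at hFeq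
      obtain ⟨he1, he2⟩ := hFeq
      simp only [mem_Ioo, hIdef] at hs ht hs' ht'
      simp only [mem_setOf_eq] at hst hst'
      replace hle : t ≤ t' := hle
      rcases eq_or_lt_of_le hle with heq | hlt
      · have : s = s' := by rw [heq] at he1; linarith
        simp only [Prod.mk.injEq]
        exact ⟨this, heq⟩
      · exfalso
        have hss : s' < s := by linarith
        obtain ⟨c, hc, hc'⟩ := exists_deriv_eq_slope h hss
          (hC2.continuousOn.mono (fun x hx => ⟨by simp at hx ⊢; linarith [hx.1],
            by simp at hx ⊢; linarith [hx.2]⟩))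
          (hdiffOn.mono (fun x hx => ⟨by simp at hx ⊢; linarith [hx.1],
            by simp at hx ⊢; linarith [hx.2]⟩))
        obtain ⟨d, hd, hd'⟩ := exists_deriv_eq_slope h hlt
          (hC2.continuousOn.mono (fun x hx => ⟨by simp at hx ⊢; linarith [hx.1],
            by simp at hx ⊢; linarith [hx.2]⟩))
          (hdiffOn.mono (fun x hx => ⟨by simp at hx ⊢; linarith [hx.1],
            by simp at hx ⊢; linarith [hx.2]⟩))
        have hcd : deriv h c = deriv h d := by
          rw [hc', hd']
          have hnum : h s - h s' = h t' - h t := by linarith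
          have hden : s - s' = t' - t := by linarith
          rw [hnum, hden]
        have hcI : c ∈ I := ⟨by linarith [hc.1, hs'.1], by linarith [hc.2, hs.2]⟩
        have hdI : d ∈ I := ⟨by linarith [hd.1, ht.1], by linarith [hd.2, ht'.2]⟩
        have : deriv h c < deriv h d :=
          hmono hcI hdI (by linarith [hc.2, hd.1])
        linarith
    intro p hp q hq hFeq
    rcases le_total p.2 q.2 with hle | hle
    · exact key p hp q hq hFeq hle
    · exact (key q hq p hp hFeq.symm hle).symm
  -- change of variables on U
  have hΦint : Integrable Φ := hΦ.integrable_of_hasCompactSupport hΦsupp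
  set f : ℝ × ℝ → ℝ := fun p => Φ (p.1 + p.2, h p.1 + h p.2) * |deriv h p.1 - deriv h p.2|
    with hfdef
  have hfeq : ∀ p : ℝ × ℝ, |(B p).det| • Φ (F p) = f p := by
    intro p
    simp only [hBdet, smul_eq_mul, hfdef, hFdef]
    rw [abs_sub_comm, mul_comm]
  have hCoV : ∫ p in F '' U, Φ p = ∫ p in U, f p := by
    rw [integral_image_eq_integral_abs_det_fderiv_smul volume hUmeas hBderiv hinj Φ]
    exact setIntegral_congr_fun hUmeas fun p _ => hfeq p
  have hIntU : IntegrableOn f U := by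
    have := (integrableOn_image_iff_integrableOn_abs_det_fderiv_smul volume hUmeas
      hBderiv hinj Φ).1 hΦint.integrableOn
    exact this.congr_fun (fun p _ => hfeq p) hUmeas
  -- swap symmetry
  have hswapMP : MeasurePreserving Prod.swap (volume : Measure (ℝ × ℝ)) volume := by
    rw [Measure.volume_eq_prod]
    exact Measure.measurePreserving_swap
  have hswapEmb : MeasurableEmbedding (Prod.swap : ℝ × ℝ → ℝ × ℝ) :=
    MeasurableEquiv.prodComm.measurableEmbedding
  have hVU : Prod.swap ⁻¹' U = V := by
    ext p
    simp only [hUdef, hVdef, mem_preimage, mem_inter_iff, mem_prod, mem_setOf_eq, Prod.fst_swap,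
      Prod.snd_swap]
    tauto
  have hfswap : ∀ p : ℝ × ℝ, f (Prod.swap p) = f p := by
    intro p
    simp only [hfdef, Prod.fst_swap, Prod.snd_swap]
    rw [add_comm, add_comm (h p.2), abs_sub_comm]
  have hIntV : IntegrableOn f V := by
    rw [← hVU]
    have := (hswapMP.integrableOn_comp_preimage hswapEmb (f := f) (s := U)).2 hIntU
    exact this.congr_fun (fun p _ => (hfswap p)) (measurable_swap hUmeas)
  have hIntVU : ∫ p in V, f p = ∫ p in U, f p := by
    rw [← hVU]
    rw [← hswapMP.setIntegral_preimage_emb hswapEmb f U]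
    exact setIntegral_congr_fun (measurable_swap hUmeas)
      fun p _ => (hfswap p).symm
  -- diagonal is null
  have hdiagnull : (volume : Measure (ℝ × ℝ)) {p : ℝ × ℝ | p.1 = p.2} = 0 := by
    rw [Measure.volume_eq_prod]
    rw [Measure.measure_prod_null ((isClosed_eq continuous_fst continuous_snd).measurableSet)]
    filter_upwards with x
    have : Prod.mk x ⁻¹' {p : ℝ × ℝ | p.1 = p.2} = {x} := by
      ext y; simp [eq_comm]
    simp [this]
  -- square ae equal to U ∪ V
  have hsq_ae : (I ×ˢ I : Set (ℝ × ℝ)) =ᵐ[(volume : Measure (ℝ × ℝ))] ((U ∪ V : Set (ℝ × ℝ))) := by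
    rw [ae_eq_set]
    constructor
    · apply measure_mono_null _ hdiagnull
      rintro p ⟨hp, hnp⟩
      simp only [hUdef, hVdef, mem_union, mem_inter_iff, mem_setOf_eq, not_or, not_and] at hnp
      by_contra hne
      rcases lt_trichotomy p.1 p.2 with hlt | heq | hgt
      · exact hnp.1 hp hlt
      · exact hne heq
      · exact hnp.2 hp hgt
    · have : (U ∪ V) \ (I ×ˢ I) = ∅ := by
        rw [diff_eq_empty]
        exact union_subset inter_subset_left inter_subset_left
      simp [this]
  have hIntSq : IntegrableOn f (I ×ˢ I) := by
    have : IntegrableOn f (U ∪ V) := hIntU.union hIntV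
    rwa [IntegrableOn, Measure.restrict_congr_set hsq_ae]
  -- the image sets
  have hAA : (fun s => (s, h s)) '' I + (fun s => (s, h s)) '' I = F '' (I ×ˢ I) := by
    rw [← Set.image2_add, Set.image2_image_left, Set.image2_image_right, ← Set.image_prod]
    exact Set.image_congr fun p _ => by simp [hFdef, Prod.ext_iff]
  set G : Set (ℝ × ℝ) := (fun s : ℝ => (2 * s, 2 * h s)) '' I with hGdef
  have hGnull : (volume : Measure (ℝ × ℝ)) G = 0 := by
    have hGmeas : MeasurableSet G :=
      himage_meas _ ((continuous_const.mul continuous_id).continuousOn.prodMk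
        (continuousOn_const.mul hC2.continuousOn))
    rw [Measure.volume_eq_prod]
    rw [Measure.measure_prod_null hGmeas]
    filter_upwards with x
    have hsub : Prod.mk x ⁻¹' G ⊆ {2 * h (x / 2)} := by
      rintro y hy
      obtain ⟨s, _, hs⟩ := hy
      simp only [Prod.mk.injEq] at hs
      obtain ⟨h1, h2⟩ := hs
      have : s = x / 2 := by linarith
      simp [← h2, this]
    simpa using measure_mono_null hsub (measure_singleton _)
  have himg_ae : F '' (I ×ˢ I) =ᵐ[volume] F '' U := by
    rw [ae_eq_set]
    constructor
    · apply measure_mono_null _ hGnull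
      rintro p ⟨⟨q, hq, rfl⟩, hnp⟩
      rcases lt_trichotomy q.1 q.2 with hlt | heq | hgt
      · exact absurd (mem_image_of_mem F (show q ∈ U from ⟨hq, hlt⟩)) hnp
      · have hq1 : F q = (fun s : ℝ => (2 * s, 2 * h s)) q.1 := by
          simp only [hFdef, Prod.ext_iff]
          constructor
          · simp [← heq]; ring
          · simp [← heq]; ring
        rw [hGdef]
        exact hq1 ▸ mem_image_of_mem _ hq.1
      · have : F (Prod.swap q) = F q := by
          simp only [hFdef, Prod.fst_swap, Prod.snd_swap]
          rw [add_comm, add_comm (h q.2)]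
        exact absurd (this ▸ mem_image_of_mem F (show Prod.swap q ∈ U from
          ⟨⟨hq.2, hq.1⟩, hgt⟩)) hnp
    · have : F '' U \ F '' (I ×ˢ I) = ∅ := by
        rw [diff_eq_empty]
        exact image_mono inter_subset_left
      simp [this]
  -- Fubini and conclusion
  have hdisj : Disjoint U V := by
    rw [Set.disjoint_left]
    rintro p ⟨_, h1⟩ ⟨_, h2⟩
    simp only [mem_setOf_eq] at h1 h2
    exact absurd (h1.trans h2) (lt_irrefl _)
  calc ∫ s in I, ∫ t in I, Φ (s + t, h s + h t) * |deriv h s - deriv h t|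
      = ∫ p in I ×ˢ I, f p := by
        rw [Measure.volume_eq_prod, setIntegral_prod f]
        rwa [← Measure.volume_eq_prod]
    _ = ∫ p in U ∪ V, f p := setIntegral_congr_set hsq_ae
    _ = (∫ p in U, f p) + ∫ p in V, f p := setIntegral_union hdisj hVmeas hIntU hIntV
    _ = 2 * ∫ p in U, f p := by rw [hIntVU]; ring
    _ = 2 * ∫ p in F '' U, Φ p := by rw [hCoV]
    _ = 2 * ∫ p in (fun s => (s, h s)) '' I + (fun s => (s, h s)) '' I, Φ p := by
        rw [hAA]
        congr 1
        exact (setIntegral_congr_set himg_ae).symm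
end

section
/- Let h : (−ε,ε) → ℝ be C² with h(0) = h'(0) = 0 and h'' bounded between two positive constants c ≤ h'' ≤ C. For N ≥ 1 and an interval I ⊂ (−ε,ε), define S_N = {(s+t, h(s)+h(t)) : s,t ∈ I, 1/N ≤ t−s ≤ 1.1/N}. Then the planar Lebesgue measure of S_N satisfies |S_N| ≍ N^{−2} (with implicit constants depending only on c, C, |I|), and for (s,t) with 1/N ≤ t−s ≤ 1.1/N one has |h'(s) − h'(t)| ≍ N^{−1}. -/
open Set MeasureTheory

noncomputable def Amap (p q : ℝ) : ℝ × ℝ →L[ℝ] ℝ × ℝ :=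
  ((ContinuousLinearMap.fst ℝ ℝ ℝ) + (ContinuousLinearMap.snd ℝ ℝ ℝ)).prod
    (p • (ContinuousLinearMap.fst ℝ ℝ ℝ) + q • (ContinuousLinearMap.snd ℝ ℝ ℝ))

lemma Amap_det (p q : ℝ) : (Amap p q : ℝ × ℝ →L[ℝ] ℝ × ℝ).det = q - p := by
  have : (Amap p q : ℝ × ℝ →ₗ[ℝ] ℝ × ℝ).det = q - p := by
    rw [← LinearMap.det_toMatrix (Module.Basis.finTwoProd ℝ), Matrix.det_fin_two]
    simp [LinearMap.toMatrix_apply, Module.Basis.finTwoProd_zero, Module.Basis.finTwoProd_one,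
      Module.Basis.coe_finTwoProd_repr, Amap]
  exact this

lemma hasFDerivAt_F (h : ℝ → ℝ) (p : ℝ × ℝ) (ds dt : ℝ)
    (hs : HasDerivAt h ds p.1) (ht : HasDerivAt h dt p.2) :
    HasFDerivAt (fun q : ℝ × ℝ => (q.1 + q.2, h q.1 + h q.2)) (Amap ds dt) p := by
  have h1 : HasFDerivAt (fun q : ℝ × ℝ => h q.1)
      (ds • ContinuousLinearMap.fst ℝ ℝ ℝ) p := by
    have := hs.hasFDerivAt.comp p hasFDerivAt_fst
    refine this.congr_fderiv ?_
    ext <;> simp [mul_comm]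
  have h2 : HasFDerivAt (fun q : ℝ × ℝ => h q.2)
      (dt • ContinuousLinearMap.snd ℝ ℝ ℝ) p := by
    have := ht.hasFDerivAt.comp p hasFDerivAt_snd
    refine this.congr_fderiv ?_
    ext <;> simp [mul_comm]
  exact (hasFDerivAt_fst.add hasFDerivAt_snd).prodMk (h1.add h2)

set_option maxHeartbeats 1000000 in
/-- For `h` of class `C²` on `(-ε,ε)` with `h(0) = h'(0) = 0` and `c ≤ h'' ≤ C`
(`0 < c`), and an interval `I = [a,b] ⊆ (-ε,ε)`, the sets
`S_N = {(s+t, h(s)+h(t)) : s,t ∈ I, 1/N ≤ t-s ≤ 1.1/N}` satisfy `|S_N| ≍ N⁻²`, and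
`|h'(s) - h'(t)| ≍ N⁻¹` whenever `1/N ≤ t-s ≤ 1.1/N`, for all sufficiently large `N`. -/
theorem measure_SN_asymp {ε : ℝ} (hε : 0 < ε) (h : ℝ → ℝ)
    (hC2 : ContDiffOn ℝ 2 h (Ioo (-ε) ε)) (h0 : h 0 = 0) (h'0 : deriv h 0 = 0)
    (c C : ℝ) (hc : 0 < c)
    (hcC : ∀ x ∈ Ioo (-ε) ε, c ≤ deriv (deriv h) x ∧ deriv (deriv h) x ≤ C)
    (a b : ℝ) (hab : a < b) (hI : Icc a b ⊆ Ioo (-ε) ε) :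
    ∃ K₁ K₂ N₀ : ℝ, 0 < K₁ ∧ 0 < K₂ ∧ 0 < N₀ ∧ ∀ N : ℝ, N₀ ≤ N →
      (K₁ / N ^ 2 ≤ (volume ((fun p : ℝ × ℝ => (p.1 + p.2, h p.1 + h p.2)) ''
          {p : ℝ × ℝ | p.1 ∈ Icc a b ∧ p.2 ∈ Icc a b ∧
            1 / N ≤ p.2 - p.1 ∧ p.2 - p.1 ≤ 1.1 / N})).toReal ∧
        (volume ((fun p : ℝ × ℝ => (p.1 + p.2, h p.1 + h p.2)) ''
          {p : ℝ × ℝ | p.1 ∈ Icc a b ∧ p.2 ∈ Icc a b ∧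
            1 / N ≤ p.2 - p.1 ∧ p.2 - p.1 ≤ 1.1 / N})).toReal ≤ K₂ / N ^ 2) ∧
      ∀ s ∈ Icc a b, ∀ t ∈ Icc a b, 1 / N ≤ t - s → t - s ≤ 1.1 / N →
        K₁ / N ≤ |deriv h s - deriv h t| ∧ |deriv h s - deriv h t| ≤ K₂ / N := by
  have hC : 0 < C := by
    have h0m : (0:ℝ) ∈ Ioo (-ε) ε := ⟨by linarith, hε⟩
    have := hcC 0 h0m
    linarith
  have hba : 0 < b - a := by linarith
  have hop : IsOpen (Ioo (-ε:ℝ) ε) := isOpen_Ioo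
  -- differentiability facts
  have hd1 : DifferentiableOn ℝ h (Ioo (-ε) ε) := hC2.differentiableOn (by norm_num)
  have hd1' : ∀ x ∈ Ioo (-ε) ε, HasDerivAt h (deriv h x) x := fun x hx =>
    ((hd1 x hx).differentiableAt (hop.mem_nhds hx)).hasDerivAt
  have hC1 : ContDiffOn ℝ 1 (deriv h) (Ioo (-ε) ε) :=
    hC2.deriv_of_isOpen hop (by norm_num)
  have hd2 : ∀ x ∈ Ioo (-ε) ε, HasDerivAt (deriv h) (deriv (deriv h) x) x := fun x hx =>
    ((hC1.differentiableOn one_ne_zero x hx).differentiableAt (hop.mem_nhds hx)).hasDerivAt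
  have hcont1 : ContinuousOn (deriv h) (Ioo (-ε) ε) := hC1.continuousOn
  have hsubIoo : ∀ x y : ℝ, x ∈ Icc a b → y ∈ Icc a b → Icc x y ⊆ Icc a b := by
    intro x y hx hy z hz
    exact ⟨le_trans hx.1 hz.1, le_trans hz.2 hy.2⟩
  -- MVT for h
  have mvth : ∀ x y : ℝ, x ∈ Icc a b → y ∈ Icc a b → x < y →
      ∃ ξ ∈ Ioo x y, h y - h x = deriv h ξ * (y - x) := by
    intro x y hx hy hxy
    have hsub : Icc x y ⊆ Ioo (-ε) ε := fun z hz => hI (hsubIoo x y hx hy hz)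
    obtain ⟨ξ, hξ, hslope⟩ := exists_hasDerivAt_eq_slope h (deriv h) hxy
      ((hd1.continuousOn).mono hsub)
      (fun z hz => hd1' z (hsub ⟨le_of_lt hz.1, le_of_lt hz.2⟩))
    refine ⟨ξ, hξ, ?_⟩
    rw [hslope]
    exact (div_mul_cancel₀ _ (sub_ne_zero.mpr hxy.ne')).symm
  -- MVT for deriv h
  have mvt : ∀ x y : ℝ, x ∈ Icc a b → y ∈ Icc a b → x < y →
      c * (y - x) ≤ deriv h y - deriv h x ∧ deriv h y - deriv h x ≤ C * (y - x) := by
    intro x y hx hy hxy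
    have hsub : Icc x y ⊆ Ioo (-ε) ε := fun z hz => hI (hsubIoo x y hx hy hz)
    obtain ⟨ξ, hξ, hslope⟩ := exists_hasDerivAt_eq_slope (deriv h) (deriv (deriv h)) hxy
      (hcont1.mono hsub)
      (fun z hz => hd2 z (hsub ⟨le_of_lt hz.1, le_of_lt hz.2⟩))
    have hξm : ξ ∈ Ioo (-ε) ε := hsub ⟨le_of_lt hξ.1, le_of_lt hξ.2⟩
    have hcb := hcC ξ hξm
    have hEq : deriv h y - deriv h x = deriv (deriv h) ξ * (y - x) := by
      rw [hslope]
      exact (div_mul_cancel₀ _ (sub_ne_zero.mpr hxy.ne')).symm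
    have hyx : 0 < y - x := by linarith
    constructor
    · rw [hEq]; nlinarith [hcb.1]
    · rw [hEq]; nlinarith [hcb.2]
  -- strict monotonicity of deriv h on [a,b]
  have hmono : StrictMonoOn (deriv h) (Icc a b) := by
    intro x hx y hy hxy
    have := (mvt x y hx hy hxy).1
    nlinarith
  refine ⟨min (0.05 * c * (b - a)) c, max (0.11 * C * (b - a)) (1.1 * C),
    max (2.2 / (b - a)) 1, ?_, ?_, ?_, ?_⟩
  · positivity
  · positivity
  · positivity
  intro N hN
  have hN1 : (1:ℝ) ≤ N := le_trans (le_max_right _ _) hN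
  have hN0 : (0:ℝ) < N := by linarith
  have hNb : 1.1 / N ≤ (b - a) / 2 := by
    have h1 : 2.2 / (b - a) ≤ N := le_trans (le_max_left _ _) hN
    rw [div_le_div_iff₀ hN0 (by norm_num)]
    rw [div_le_iff₀ hba] at h1
    nlinarith
  set F : ℝ × ℝ → ℝ × ℝ := fun p => (p.1 + p.2, h p.1 + h p.2) with hF
  set D : Set (ℝ × ℝ) := {p : ℝ × ℝ | p.1 ∈ Icc a b ∧ p.2 ∈ Icc a b ∧
      1 / N ≤ p.2 - p.1 ∧ p.2 - p.1 ≤ 1.1 / N} with hD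
  have hDmeas : MeasurableSet D := by
    apply MeasurableSet.inter
    · exact (measurableSet_Icc.preimage measurable_fst)
    apply MeasurableSet.inter
    · exact (measurableSet_Icc.preimage measurable_snd)
    apply MeasurableSet.inter
    · exact measurableSet_le measurable_const (measurable_snd.sub measurable_fst)
    · exact measurableSet_le (measurable_snd.sub measurable_fst) measurable_const
  -- membership facts
  have hmemIoo : ∀ x ∈ Icc a b, x ∈ Ioo (-ε) ε := fun x hx => hI hx
  have hfd : ∀ p ∈ D, HasFDerivWithinAt F (Amap (deriv h p.1) (deriv h p.2)) D p := by
    intro p hp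
    exact (hasFDerivAt_F h p _ _ (hd1' p.1 (hmemIoo _ hp.1)) (hd1' p.2 (hmemIoo _ hp.2.1))).hasFDerivWithinAt
  have hNpos : 0 < 1 / N := by positivity
  -- injectivity
  have hinj : InjOn F D := by
    have claim : ∀ p ∈ D, ∀ q ∈ D, F p = F q → p.2 < q.2 → False := by
      rintro ⟨s, t⟩ hp ⟨s', t'⟩ hq heq htt
      obtain ⟨hs, ht, hd₁, hd₂⟩ := hp
      obtain ⟨hs', ht', hd₁', hd₂'⟩ := hq
      simp only [hF, Prod.mk.injEq] at heq
      obtain ⟨e1, e2⟩ := heq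
      replace hd₁ : 1 / N ≤ t - s := hd₁
      replace hd₁' : 1 / N ≤ t' - s' := hd₁'
      replace htt : t < t' := htt
      replace e1 : s + t = s' + t' := e1
      replace e2 : h s + h t = h s' + h t' := e2
      have hst : s < t := by linarith
      have hss : s' < s := by linarith
      obtain ⟨ξ, hξ, hξe⟩ := mvth t t' ht ht' htt
      obtain ⟨η, hη, hηe⟩ := mvth s' s hs' hs hss
      have hξm : ξ ∈ Icc a b := ⟨le_trans ht.1 (le_of_lt hξ.1), le_trans (le_of_lt hξ.2) ht'.2⟩
      have hηm : η ∈ Icc a b := ⟨le_trans hs'.1 (le_of_lt hη.1), le_trans (le_of_lt hη.2) hs.2⟩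
      have hηξ : η < ξ := by
        have := hη.2; have := hξ.1; linarith
      have hlt := hmono hηm hξm hηξ
      have hd : s - s' = t' - t := by linarith
      have : deriv h η * (t' - t) = deriv h ξ * (t' - t) := by
        rw [← hd] at hξe ⊢
        nlinarith [hηe, hξe]
      have htt0 : 0 < t' - t := by linarith
      nlinarith
    intro p hp q hq heq
    rcases lt_trichotomy p.2 q.2 with hlt | heq2 | hgt
    · exact absurd (claim p hp q hq heq hlt) (fun x => x)
    · have e1 : p.1 + p.2 = q.1 + q.2 := congrArg Prod.fst heq
      have h1 : p.1 = q.1 := by linarith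
      exact Prod.ext h1 heq2
    · exact absurd (claim q hq p hp heq.symm hgt) (fun x => x)
  -- change of variables
  have key : volume (F '' D)
      = ∫⁻ p in D, ENNReal.ofReal |deriv h p.2 - deriv h p.1| := by
    have := lintegral_image_eq_lintegral_abs_det_fderiv_mul volume hDmeas hfd hinj
      (fun _ => (1 : ENNReal))
    simpa [setLIntegral_one, mul_one, Amap_det] using this
  -- pointwise det bounds
  have detb : ∀ p ∈ D, c / N ≤ |deriv h p.2 - deriv h p.1| ∧
      |deriv h p.2 - deriv h p.1| ≤ 1.1 * C / N := by
    rintro ⟨s, t⟩ hp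
    obtain ⟨hs, ht, hd₁, hd₂⟩ := hp
    replace hd₁ : 1 / N ≤ t - s := hd₁
    replace hd₂ : t - s ≤ 1.1 / N := hd₂
    have hst : s < t := by linarith
    obtain ⟨hl, hu⟩ := mvt s t hs ht hst
    have hpos : 0 ≤ deriv h t - deriv h s := by nlinarith
    rw [abs_of_nonneg hpos]
    constructor
    · calc c / N = c * (1 / N) := by ring
        _ ≤ c * (t - s) := by nlinarith
        _ ≤ _ := hl
    · calc deriv h t - deriv h s ≤ C * (t - s) := hu
        _ ≤ C * (1.1 / N) := by nlinarith
        _ = 1.1 * C / N := by ring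
  -- volume of D, upper bound
  have prodD : volume D = ∫⁻ x, volume (Prod.mk x ⁻¹' D) := by
    rw [Measure.volume_eq_prod, Measure.prod_apply hDmeas]
  have Dub : volume D ≤ ENNReal.ofReal (b - a) * ENNReal.ofReal (0.1 / N) := by
    rw [prodD]
    have hb : ∀ x : ℝ, volume (Prod.mk x ⁻¹' D)
        ≤ (Icc a b).indicator (fun _ => ENNReal.ofReal (0.1 / N)) x := by
      intro x
      by_cases hx : x ∈ Icc a b
      · rw [indicator_of_mem hx]
        have : Prod.mk x ⁻¹' D ⊆ Icc (x + 1 / N) (x + 1.1 / N) := by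
          rintro t ⟨_, _, h1, h2⟩
          exact ⟨by linarith, by linarith⟩
        calc volume (Prod.mk x ⁻¹' D) ≤ volume (Icc (x + 1 / N) (x + 1.1 / N)) :=
              measure_mono this
          _ = ENNReal.ofReal (0.1 / N) := by
              rw [Real.volume_Icc]; congr 1; ring
      · rw [indicator_of_notMem hx]
        have : Prod.mk x ⁻¹' D = ∅ := by
          ext t; simp only [mem_preimage, mem_empty_iff_false, iff_false]
          intro ht; exact hx ht.1
        simp [this]
    calc ∫⁻ x, volume (Prod.mk x ⁻¹' D)
        ≤ ∫⁻ x, (Icc a b).indicator (fun _ => ENNReal.ofReal (0.1 / N)) x :=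
          lintegral_mono hb
      _ = ENNReal.ofReal (0.1 / N) * volume (Icc a b) := by
          rw [lintegral_indicator measurableSet_Icc _, setLIntegral_const]
      _ = ENNReal.ofReal (b - a) * ENNReal.ofReal (0.1 / N) := by
          rw [Real.volume_Icc, mul_comm]
  -- volume of D, lower bound
  have Dlb : ENNReal.ofReal ((b - a) / 2) * ENNReal.ofReal (0.1 / N) ≤ volume D := by
    rw [prodD]
    set m := (a + b) / 2 with hm
    have hb : ∀ x : ℝ, (Icc a m).indicator (fun _ => ENNReal.ofReal (0.1 / N)) x
        ≤ volume (Prod.mk x ⁻¹' D) := by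
      intro x
      by_cases hx : x ∈ Icc a m
      · rw [indicator_of_mem hx]
        have hsub : Icc (x + 1 / N) (x + 1.1 / N) ⊆ Prod.mk x ⁻¹' D := by
          intro t ⟨h1, h2⟩
          have hxm : x ≤ m := hx.2
          have hxa : a ≤ x := hx.1
          refine ⟨⟨hxa, by dsimp [m] at hxm ⊢; linarith⟩, ⟨by linarith, ?_⟩, by linarith, by linarith⟩
          dsimp [m] at hxm
          linarith
        calc ENNReal.ofReal (0.1 / N) = volume (Icc (x + 1 / N) (x + 1.1 / N)) := by
              rw [Real.volume_Icc]; congr 1; ring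
          _ ≤ volume (Prod.mk x ⁻¹' D) := measure_mono hsub
      · rw [indicator_of_notMem hx]; exact zero_le
    calc ENNReal.ofReal ((b - a) / 2) * ENNReal.ofReal (0.1 / N)
        = ENNReal.ofReal (0.1 / N) * volume (Icc a m) := by
          rw [Real.volume_Icc, mul_comm]
          congr 2
          dsimp [m]; ring
      _ = ∫⁻ x, (Icc a m).indicator (fun _ => ENNReal.ofReal (0.1 / N)) x := by
          rw [lintegral_indicator measurableSet_Icc _, setLIntegral_const]
      _ ≤ ∫⁻ x, volume (Prod.mk x ⁻¹' D) := lintegral_mono hb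
  -- integral bounds
  have Iub : volume (F '' D) ≤ ENNReal.ofReal (1.1 * C / N) *
      (ENNReal.ofReal (b - a) * ENNReal.ofReal (0.1 / N)) := by
    rw [key]
    calc ∫⁻ p in D, ENNReal.ofReal |deriv h p.2 - deriv h p.1|
        ≤ ∫⁻ _ in D, ENNReal.ofReal (1.1 * C / N) := by
          apply setLIntegral_mono' hDmeas
          intro p hp
          exact ENNReal.ofReal_le_ofReal (detb p hp).2
      _ = ENNReal.ofReal (1.1 * C / N) * volume D := setLIntegral_const _ _
      _ ≤ _ := by
          exact mul_le_mul_right Dub _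
  have Ilb : ENNReal.ofReal (c / N) *
      (ENNReal.ofReal ((b - a) / 2) * ENNReal.ofReal (0.1 / N)) ≤ volume (F '' D) := by
    rw [key]
    calc ENNReal.ofReal (c / N) * (ENNReal.ofReal ((b - a) / 2) * ENNReal.ofReal (0.1 / N))
        ≤ ENNReal.ofReal (c / N) * volume D := mul_le_mul_right Dlb _
      _ = ∫⁻ _ in D, ENNReal.ofReal (c / N) := (setLIntegral_const _ _).symm
      _ ≤ ∫⁻ p in D, ENNReal.ofReal |deriv h p.2 - deriv h p.1| := by
          apply setLIntegral_mono
            ((measurable_deriv h).comp measurable_snd |>.sub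
              ((measurable_deriv h).comp measurable_fst)).abs.ennreal_ofReal
          intro p hp
          exact ENNReal.ofReal_le_ofReal (detb p hp).1
  -- convert to real bounds
  have hUB : volume (F '' D) ≤ ENNReal.ofReal ((0.11 * C * (b - a)) / N ^ 2) := by
    refine le_trans Iub ?_
    rw [← ENNReal.ofReal_mul (by positivity), ← ENNReal.ofReal_mul (by positivity)]
    apply ENNReal.ofReal_le_ofReal
    have : (1.1 * C / N) * ((b - a) * (0.1 / N)) = 0.11 * C * (b - a) / N ^ 2 := by
      field_simp; ring
    linarith [this.le]
  have hLB : ENNReal.ofReal ((0.05 * c * (b - a)) / N ^ 2) ≤ volume (F '' D) := by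
    refine le_trans ?_ Ilb
    rw [← ENNReal.ofReal_mul (by positivity), ← ENNReal.ofReal_mul (by positivity)]
    apply ENNReal.ofReal_le_ofReal
    have : (c / N) * ((b - a) / 2 * (0.1 / N)) = 0.05 * c * (b - a) / N ^ 2 := by
      field_simp; ring
    linarith [this.le]
  have hfin : volume (F '' D) ≠ ⊤ :=
    (lt_of_le_of_lt hUB ENNReal.ofReal_lt_top).ne
  constructor
  · constructor
    · rw [← ENNReal.ofReal_le_iff_le_toReal hfin]
      refine le_trans ?_ hLB
      apply ENNReal.ofReal_le_ofReal
      gcongr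
      exact min_le_left _ _
    · apply ENNReal.toReal_le_of_le_ofReal (by positivity)
      refine le_trans hUB ?_
      apply ENNReal.ofReal_le_ofReal
      gcongr
      exact le_max_left _ _
  · intro s hs t ht h1 h2
    have hst : s < t := by linarith [hNpos]
    obtain ⟨hl, hu⟩ := mvt s t hs ht hst
    have hpos : 0 ≤ deriv h t - deriv h s := by nlinarith
    rw [abs_sub_comm, abs_of_nonneg hpos]
    constructor
    · calc min (0.05 * c * (b - a)) c / N ≤ c / N := by
            gcongr; exact min_le_right _ _
        _ = c * (1 / N) := by ring
        _ ≤ c * (t - s) := by nlinarith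
        _ ≤ _ := hl
    · calc deriv h t - deriv h s ≤ C * (t - s) := hu
        _ ≤ C * (1.1 / N) := by nlinarith
        _ = 1.1 * C / N := by ring
        _ ≤ max (0.11 * C * (b - a)) (1.1 * C) / N := by
            gcongr; exact le_max_right _ _
end
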